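/- arXiv:1505.06065 — 5 statements merged into one kernel-verified Lean document; each statement's English description precedes it below -/
import Mathlib

section
/- Let A be a complex unital Banach algebra and let (C(t))_{t∈ℝ} be a cosine function in A. If limsup_{t→0} ρ(C(t) − 1_A) < 2, then limsup_{t→0} ρ(C(t) − 1_A) = 0, where ρ(x) denotes the spectral radius of x. -/
open Filter Topology
open scoped ENNReal NNReal


/-- A cosine function in a unital Banach algebra: `C 0 = 1` and
`C (s+t) + C (s-t) = 2 * C s * C t` for all real `s, t`. -/
def IsCosineFunction {A : Type*} [NormedRing A] (C : ℝ → A) : Prop :=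
  C 0 = 1 ∧ ∀ s t : ℝ, C (s + t) + C (s - t) = 2 * C s * C t

noncomputable def ztlD (x : ℝ) : ℝ := |x - round x|

lemma ztlD_nonneg (x : ℝ) : 0 ≤ ztlD x := abs_nonneg _

lemma ztlD_le_half (x : ℝ) : ztlD x ≤ 1/2 := abs_sub_round x

lemma ztlD_le (x : ℝ) (n : ℤ) : ztlD x ≤ |x - n| := round_le x n

lemma ztlD_triangle (x y : ℝ) : ztlD y ≤ |y - x| + ztlD x := by
  have h := ztlD_le y (round x)
  have : |y - (round x : ℝ)| ≤ |y - x| + |x - round x| := by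
    have := abs_sub_le y x (round x : ℝ); linarith [abs_sub_le y x (round x : ℝ)]
  calc ztlD y ≤ |y - (round x : ℝ)| := h
    _ ≤ |y - x| + ztlD x := this

lemma ztlD_lower {y : ℝ} (h0 : 0 ≤ y) (h2 : y ≤ 1/2) (l : ℤ) : y ≤ ztlD ((l : ℝ) + y) := by
  unfold ztlD
  set k := round ((l : ℝ) + y) with hk
  have hrw : ((l : ℝ) + y) - k = y - ((k - l : ℤ) : ℝ) := by push_cast; ring
  rw [hrw]
  set m : ℤ := k - l
  rcases le_or_gt m 0 with hm | hm
  · have : (m : ℝ) ≤ 0 := by exact_mod_cast hm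
    rw [abs_of_nonneg (by linarith)]; linarith
  · have : (1 : ℝ) ≤ (m : ℝ) := by exact_mod_cast hm
    rw [abs_of_nonpos (by linarith)]; linarith

lemma ztl_cos_le (x : ℝ) :
    Real.cos x ≤ -1 + (2 * Real.pi * (1/2 - ztlD (x / (2 * Real.pi))))^2 / 2 := by
  have hπ := Real.pi_pos
  set n := round (x / (2 * Real.pi)) with hn
  set s := x / (2 * Real.pi) - n with hs
  have hD : ztlD (x / (2 * Real.pi)) = |s| := rfl
  have habs : |s| ≤ 1/2 := abs_sub_round _
  have hx : x = 2 * Real.pi * s + n * (2 * Real.pi) := by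
    rw [hs]; field_simp; ring
  have h1 : Real.cos x = Real.cos (2 * Real.pi * s) := by
    rw [hx, Real.cos_add_int_mul_two_pi]
  have h2 : Real.cos (2 * Real.pi * s) = Real.cos (2 * Real.pi * |s|) := by
    rcases abs_choice s with h | h
    · rw [h]
    · rw [h]; rw [show 2 * Real.pi * -s = -(2 * Real.pi * s) by ring, Real.cos_neg]
  set e := Real.pi - 2 * Real.pi * |s| with he
  have he0 : 0 ≤ e := by nlinarith [abs_nonneg s]
  have h3 : Real.cos e = - Real.cos (2 * Real.pi * |s|) := Real.cos_pi_sub _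
  have h4 : 1 - e^2/2 ≤ Real.cos e := Real.one_sub_sq_div_two_le_cos
  have hee : e = 2 * Real.pi * (1/2 - |s|) := by rw [he]; ring
  rw [h1, h2, hD]
  nlinarith [h3, h4, hee]

lemma ztl_D_le_of_cos_ge {x δ₁ : ℝ} (h1 : 0 < δ₁) (h : -1 + δ₁ ≤ Real.cos x) :
    ztlD (x / (2 * Real.pi)) ≤ 1/2 - Real.sqrt (2 * δ₁) / (2 * Real.pi) := by
  have hπ := Real.pi_pos
  have hb := ztl_cos_le x
  set D := ztlD (x / (2 * Real.pi)) with hD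
  have hD2 : D ≤ 1/2 := ztlD_le_half _
  have h2 : 2 * δ₁ ≤ (2 * Real.pi * (1/2 - D))^2 := by nlinarith
  have h3 : Real.sqrt (2 * δ₁) ≤ 2 * Real.pi * (1/2 - D) := by
    have := Real.sqrt_le_sqrt h2
    rwa [Real.sqrt_sq (by nlinarith)] at this
  have : Real.sqrt (2*δ₁) / (2*Real.pi) ≤ 1/2 - D := by
    rw [div_le_iff₀ (by linarith)]; linarith [h3]
  linarith

lemma ztl_one_sub_cos_le (x : ℝ) : 1 - Real.cos x ≤ 10 * ztlD (x / (2 * Real.pi)) := by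
  have hπ := Real.pi_pos
  have hπ15 : Real.pi < 3.15 := by
    have := Real.pi_lt_d2; linarith
  set n := round (x / (2 * Real.pi)) with hn
  set s := x / (2 * Real.pi) - n with hs
  have hD : ztlD (x / (2 * Real.pi)) = |s| := rfl
  have habs : |s| ≤ 1/2 := abs_sub_round _
  have hx : x = 2 * Real.pi * s + n * (2 * Real.pi) := by rw [hs]; field_simp; ring
  have h1 : Real.cos x = Real.cos (2 * Real.pi * s) := by
    rw [hx, Real.cos_add_int_mul_two_pi]
  have h4 : 1 - (2*Real.pi*s)^2/2 ≤ Real.cos (2*Real.pi*s) := Real.one_sub_sq_div_two_le_cos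
  have hs2 : s^2 ≤ |s| * (1/2) := by
    have h5 := mul_le_mul_of_nonneg_left habs (abs_nonneg s)
    calc s^2 = |s| * |s| := by rw [abs_mul_abs_self]; ring
      _ ≤ |s| * (1/2) := h5
  have hpi2 : Real.pi^2 ≤ 10 := by nlinarith
  rw [h1, hD]
  nlinarith [hs2, hpi2, abs_nonneg s, sq_nonneg s]
lemma ztl_structure {γ : ℝ} (hγ : 0 < γ) :
    ∃ K : ℕ, 0 < K ∧ ∀ (α : ℝ) (N : ℕ), 0 < N →
      (∀ m : ℕ, 1 ≤ m → m ≤ N → ztlD (m * α) ≤ 1/2 - γ) →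
      ztlD (K * α) ≤ K / N := by
  set Q : ℕ := ⌈3/γ⌉₊ with hQ
  refine ⟨(Q+1).factorial, Nat.factorial_pos _, ?_⟩
  intro α N hN hyp
  obtain ⟨q, hq1, hq2⟩ := Real.exists_rat_abs_sub_le_and_den_le α hN
  set d : ℕ := q.den with hd
  have hd1 : 1 ≤ d := q.pos
  set p : ℤ := q.num with hp
  set K : ℕ := (Q+1).factorial with hK
  have hqcast : (q : ℝ) = (p : ℝ) / (d : ℝ) := by
    rw [hp, hd, Rat.cast_def]
  have hdpos : (0:ℝ) < d := by exact_mod_cast hd1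
  have hNpos : (0:ℝ) < N := by exact_mod_cast hN
  by_cases hcase : d ≤ Q + 1
  · -- small denominator
    have hdvd : d ∣ K := Nat.dvd_factorial hd1 hcase
    obtain ⟨c, hc⟩ := hdvd
    have hKq : (K : ℝ) * (q : ℝ) = ((c * p : ℤ) : ℝ) := by
      rw [hqcast, hc]; push_cast; field_simp
    have h1 : ztlD (K * α) ≤ |(K:ℝ) * α - ((c*p : ℤ):ℝ)| := ztlD_le _ _
    have h2 : |(K:ℝ) * α - ((c*p : ℤ):ℝ)| = (K:ℝ) * |α - q| := by
      rw [← hKq, ← mul_sub, abs_mul, abs_of_nonneg (by positivity : (0:ℝ) ≤ (K:ℝ))]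
    have h3 : (K:ℝ) * |α - q| ≤ (K:ℝ) * (1 / ((N+1)*d)) := by
      apply mul_le_mul_of_nonneg_left hq1 (by positivity)
    have h4 : (K:ℝ) * (1 / ((N+1)*d)) ≤ K / N := by
      have hd1' : (1:ℝ) ≤ (d:ℝ) := by exact_mod_cast hd1
      rw [mul_one_div]
      apply div_le_div_of_nonneg_left (by positivity) hNpos ?_ |>.trans_eq rfl
      nlinarith
    linarith
  · -- large denominator: contradiction
    exfalso
    push_neg at hcase
    have hd2 : 2 ≤ d := by omega
    set j : ℕ := d / 2 with hj
    have hj1 : 1 ≤ j := Nat.one_le_div_iff (by omega) |>.mpr hd2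
    have hjd : j < d := Nat.div_lt_self (by omega) (by omega)
    have hjle : (j : ℝ) ≤ (d : ℝ)/2 := by
      rw [le_div_iff₀ (by norm_num : (0:ℝ) < 2)]
      exact_mod_cast Nat.div_mul_le_self d 2
    have hjge : ((d:ℝ) - 1)/2 ≤ (j:ℝ) := by
      have : d ≤ 2 * j + 1 := by omega
      have := (Nat.cast_le (α := ℝ)).mpr this
      push_cast at this; linarith
    -- coprimality and Bezout
    have hcop : IsCoprime p (d : ℤ) := by
      rw [Int.isCoprime_iff_gcd_eq_one]
      exact_mod_cast q.reduced
    obtain ⟨a, b, hab⟩ := hcop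
    -- m' := (a * j) % d
    set m' : ℤ := (a * j) % d with hm'
    have hdz : (0:ℤ) < (d:ℤ) := by exact_mod_cast hd1
    have hm'0 : 0 ≤ m' := Int.emod_nonneg _ (by omega)
    have hm'd : m' < d := Int.emod_lt_of_pos _ hdz
    have hdiv : (d:ℤ) ∣ (a * j - m') := Int.dvd_self_sub_of_emod_eq rfl
    obtain ⟨tq, htq⟩ := hdiv
    -- m' * p = d * l + j for some l
    have hm'eq : m' = a * j - d * tq := by linarith [htq]
    have hmp : ∃ l : ℤ, m' * p = d * l + j := by
      refine ⟨-(b * j + tq * p), ?_⟩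
      linear_combination p * hm'eq + (j : ℤ) * hab
    obtain ⟨l, hl⟩ := hmp
    have hm'ne : m' ≠ 0 := by
      intro h0
      rw [h0, zero_mul] at hl
      have hjl : (j:ℤ) = (d:ℤ) * (-l) := by linear_combination -hl
      have : (d:ℤ) ∣ (j:ℤ) := ⟨-l, hjl⟩
      have := Int.le_of_dvd (by exact_mod_cast hj1) this
      omega
    set m : ℕ := m'.toNat with hm
    have hm1 : 1 ≤ m := by omega
    have hmd : m < d := by omega
    have hmN : m ≤ N := by omega
    have hmcast : (m : ℝ) = (m' : ℝ) := by
      have h9 : ((m'.toNat : ℤ)) = m' := Int.toNat_of_nonneg hm'0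
      rw [hm]; exact_mod_cast congrArg (fun z : ℤ => (z : ℝ)) h9
    -- lower bound on ztlD (m * α)
    have hmq : (m:ℝ) * (q:ℝ) = (l:ℝ) + (j:ℝ)/(d:ℝ) := by
      rw [hmcast, hqcast]
      have : (m':ℝ) * (p:ℝ) = (d:ℝ) * (l:ℝ) + (j:ℝ) := by exact_mod_cast congrArg (Int.cast : ℤ → ℝ) hl
      field_simp
      linarith [this]
    have hjd0 : 0 ≤ (j:ℝ)/(d:ℝ) := by positivity
    have hjdhalf : (j:ℝ)/(d:ℝ) ≤ 1/2 := by
      rw [div_le_iff₀ hdpos]; linarith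
    have hlow : (j:ℝ)/(d:ℝ) ≤ ztlD ((m:ℝ) * (q:ℝ)) := by
      rw [hmq]; exact ztlD_lower hjd0 hjdhalf l
    have htri : ztlD ((m:ℝ)*(q:ℝ)) ≤ |(m:ℝ)*(q:ℝ) - (m:ℝ)*α| + ztlD ((m:ℝ)*α) := ztlD_triangle _ _
    have hdiff : |(m:ℝ)*(q:ℝ) - (m:ℝ)*α| ≤ (d:ℝ) * |α - q| := by
      rw [← mul_sub, abs_mul, abs_of_nonneg (by positivity : (0:ℝ) ≤ (m:ℝ))]
      rw [abs_sub_comm]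
      apply mul_le_mul_of_nonneg_right _ (abs_nonneg _)
      exact_mod_cast hmd.le
    have hsmall : (d:ℝ) * |α - q| ≤ 1/(N+1) := by
      calc (d:ℝ) * |α - q| ≤ (d:ℝ) * (1/((N+1)*d)) := by
            apply mul_le_mul_of_nonneg_left hq1 hdpos.le
        _ = 1/(N+1) := by field_simp
    have hub := hyp m hm1 hmN
    -- combine
    have hQ3 : 3/γ ≤ (Q:ℝ) := Nat.le_ceil _
    have hdQ : (3:ℝ)/γ + 2 ≤ (d:ℝ) := by
      have : (Q:ℝ) + 2 ≤ (d:ℝ) := by exact_mod_cast hcase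
      linarith
    have hdg : 3/(2*(d:ℝ)) < γ := by
      have h1 : γ * (3/γ + 2) ≤ γ * d := mul_le_mul_of_nonneg_left hdQ hγ.le
      have h2 : γ * (3/γ) = 3 := by field_simp
      rw [div_lt_iff₀ (by linarith)]
      nlinarith
    have hNd : 1/((N:ℝ)+1) ≤ 1/(d:ℝ) := by
      apply one_div_le_one_div_of_le hdpos
      have : (d:ℝ) ≤ (N:ℝ) := by exact_mod_cast hq2
      linarith
    -- ztlD(mα) ≥ j/d - 1/(N+1) ≥ 1/2 - 3/(2d) > 1/2 - γ, contradiction with hub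
    have : (1:ℝ)/2 - 3/(2*(d:ℝ)) ≤ ztlD ((m:ℝ)*α) := by
      have h5 := hlow.trans htri
      have h6 : (1:ℝ)/2 - 1/(2*(d:ℝ)) ≤ (j:ℝ)/(d:ℝ) := by
        have h61 := mul_le_mul_of_nonneg_right hjge (by positivity : (0:ℝ) ≤ 1/(d:ℝ))
        have h62 : ((d:ℝ)-1)/2 * (1/(d:ℝ)) = 1/2 - 1/(2*(d:ℝ)) := by field_simp
        have h63 : (j:ℝ) * (1/(d:ℝ)) = (j:ℝ)/(d:ℝ) := by ring
        linarith
      have h7 : 1/((N:ℝ)+1) ≤ 1/(d:ℝ) := hNd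
      have h8 : 1/(d:ℝ) + 1/(2*(d:ℝ)) = 3/(2*(d:ℝ)) := by field_simp; ring
      linarith [hdiff, hsmall]
    have hcast : ((m:ℝ))*α = ((m:ℕ):ℝ)*α := rfl
    linarith [hub, hdg]
lemma ztl_cos_mk (z : ℂ) : Complex.cos z =
    ⟨Real.cos z.re * Real.cosh z.im, -(Real.sin z.re * Real.sinh z.im)⟩ := by
  rw [Complex.cos_eq]
  apply Complex.ext <;>
    simp [Complex.cos_ofReal_re, Complex.cos_ofReal_im, Complex.sin_ofReal_re,
      Complex.sin_ofReal_im, Complex.cosh_ofReal_re, Complex.cosh_ofReal_im,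
      Complex.sinh_ofReal_re, Complex.sinh_ofReal_im]

lemma ztl_sinh_le_abs_cos (z : ℂ) : Real.sinh |z.im| ≤ ‖Complex.cos z‖ := by
  set a := Real.cos z.re * Real.cosh z.im with ha
  set b := Real.sin z.re * Real.sinh z.im with hb
  rw [ztl_cos_mk z, Complex.norm_def, Complex.normSq_mk]
  have h1 : Real.sinh |z.im| ^ 2 ≤ a * a + (-b) * (-b) := by
    have hc : Real.cosh z.im ^ 2 = Real.sinh z.im ^ 2 + 1 := by
      nlinarith [Real.cosh_sq_sub_sinh_sq z.im]
    have hs : Real.sinh |z.im| ^ 2 = Real.sinh z.im ^ 2 := by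
      rw [← Real.abs_sinh, sq_abs]
    rw [hs, ha, hb]
    nlinarith [Real.sin_sq_add_cos_sq z.re, sq_nonneg (Real.sinh z.im),
      sq_nonneg (Real.cos z.re)]
  calc Real.sinh |z.im| = Real.sqrt (Real.sinh |z.im| ^ 2) :=
        (Real.sqrt_sq (Real.sinh_nonneg_iff.mpr (abs_nonneg _))).symm
    _ ≤ Real.sqrt (a * a + (-b) * (-b)) := Real.sqrt_le_sqrt h1

lemma ztl_abs_cos_sub (z : ℂ) :
    ‖Complex.cos z - Complex.cos (z.re : ℂ)‖ ≤ Real.exp |z.im| - 1 := by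
  have h1 : Complex.cos (z.re : ℂ) = ⟨Real.cos z.re, 0⟩ := by
    rw [← Complex.ofReal_cos]; rfl
  have h2 : Complex.cos z - Complex.cos (z.re:ℂ) =
      ⟨Real.cos z.re * (Real.cosh z.im - 1), -(Real.sin z.re * Real.sinh z.im)⟩ := by
    rw [ztl_cos_mk z, h1]
    apply Complex.ext <;> simp [Complex.sub_re, Complex.sub_im] <;> ring
  rw [h2]
  have h3 := Complex.norm_le_abs_re_add_abs_im
    (⟨Real.cos z.re * (Real.cosh z.im - 1), -(Real.sin z.re * Real.sinh z.im)⟩ : ℂ)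
  have h4 : |Real.cos z.re * (Real.cosh z.im - 1)| ≤ Real.cosh |z.im| - 1 := by
    rw [abs_mul, Real.cosh_abs]
    calc |Real.cos z.re| * |Real.cosh z.im - 1| ≤ 1 * |Real.cosh z.im - 1| := by
          apply mul_le_mul_of_nonneg_right (Real.abs_cos_le_one _) (abs_nonneg _)
      _ = Real.cosh z.im - 1 := by
          rw [one_mul, abs_of_nonneg]; linarith [Real.one_le_cosh z.im]
  have h5 : |-(Real.sin z.re * Real.sinh z.im)| ≤ Real.sinh |z.im| := by
    rw [abs_neg, abs_mul, ← Real.abs_sinh]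
    calc |Real.sin z.re| * |Real.sinh z.im| ≤ 1 * |Real.sinh z.im| :=
          mul_le_mul_of_nonneg_right (Real.abs_sin_le_one _) (abs_nonneg _)
      _ = |Real.sinh z.im| := one_mul _
  have h6 : Real.cosh |z.im| + Real.sinh |z.im| = Real.exp |z.im| := Real.cosh_add_sinh _
  have h7 : ((⟨Real.cos z.re * (Real.cosh z.im - 1), -(Real.sin z.re * Real.sinh z.im)⟩ : ℂ)).re
      = Real.cos z.re * (Real.cosh z.im - 1) := rfl
  have h8 : ((⟨Real.cos z.re * (Real.cosh z.im - 1), -(Real.sin z.re * Real.sinh z.im)⟩ : ℂ)).im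
      = -(Real.sin z.re * Real.sinh z.im) := rfl
  rw [h7, h8] at h3
  linarith

lemma ztl_exp_sub_one_le {x : ℝ} (h0 : 0 ≤ x) (h2 : x ≤ 2) : Real.exp x - 1 ≤ 8 * x := by
  have h3 : Real.exp x * (1 - x) ≤ 1 := by
    have := Real.add_one_le_exp (-x)
    have hpos := Real.exp_pos x
    have hmul : Real.exp x * Real.exp (-x) = 1 := by
      rw [← Real.exp_add]; simp
    nlinarith
  have h4 : Real.exp x ≤ Real.exp 2 := Real.exp_le_exp.mpr h2
  have h5 : Real.exp 2 ≤ 8 := by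
    have h6 : Real.exp 2 = Real.exp 1 * Real.exp 1 := by
      rw [← Real.exp_add]; norm_num
    nlinarith [Real.exp_one_lt_d9, Real.exp_pos 1]
  nlinarith [Real.exp_pos x]

lemma ztl_sinh_two_gt : (3:ℝ) < Real.sinh 2 := by
  rw [Real.sinh_eq]
  have h6 : Real.exp 2 = Real.exp 1 * Real.exp 1 := by rw [← Real.exp_add]; norm_num
  have h7 : Real.exp (-2) ≤ 1 := by
    rw [show (1:ℝ) = Real.exp 0 by simp]
    exact Real.exp_le_exp.mpr (by norm_num)
  nlinarith [Real.exp_one_gt_d9]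
lemma ztl_real_cos_dist (x : ℝ) :
    ‖Complex.cos (x:ℂ) - 1‖ = 1 - Real.cos x := by
  rw [← Complex.ofReal_cos, show (1:ℂ) = ((1:ℝ):ℂ) by norm_num, ← Complex.ofReal_sub,
    Complex.norm_real, Real.norm_eq_abs, abs_of_nonpos (by linarith [Real.cos_le_one x])]
  ring

set_option maxHeartbeats 1000000 in
lemma ztl_scalar {r : ℝ} (hr0 : 0 ≤ r) (hr2 : r < 2) {ε : ℝ} (hε : 0 < ε) :
    ∃ K N : ℕ, 0 < K ∧ 0 < N ∧ K ≤ N ∧ ∀ w : ℂ,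
      (∀ m : ℕ, 1 ≤ m → m ≤ N → ‖Complex.cos ((m:ℂ) * w) - 1‖ ≤ r) →
      ‖Complex.cos ((K:ℂ) * w) - 1‖ ≤ ε := by
  have hπ := Real.pi_pos
  set δ₀ := 2 - r with hδ₀
  have hδ₀pos : 0 < δ₀ := by simp only [hδ₀]; linarith
  have hδ₀le : δ₀ ≤ 2 := by simp only [hδ₀]; linarith
  set δ₁ := δ₀ / 2 with hδ₁
  have hδ₁pos : 0 < δ₁ := by positivity
  set γ := Real.sqrt (2 * δ₁) / (2 * Real.pi) with hγdef
  have hγ : 0 < γ := by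
    apply div_pos (Real.sqrt_pos.mpr (by linarith)) (by linarith)
  obtain ⟨K, hKpos, hstr⟩ := ztl_structure hγ
  have hKR : (0:ℝ) < K := by exact_mod_cast hKpos
  obtain ⟨N, hNge⟩ := exists_nat_ge (32/δ₀ + 32*K/ε + 32*(20*K/ε + 1)/δ₀ + K + 1)
  have ha : (0:ℝ) ≤ 32/δ₀ := by positivity
  have hb : (0:ℝ) ≤ 32*K/ε := by positivity
  have hc : (0:ℝ) ≤ 32*(20*K/ε + 1)/δ₀ := by positivity
  have hNR1 : (1:ℝ) ≤ N := by linarith [Nat.cast_nonneg (α := ℝ) K]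
  have hN0 : 0 < N := by exact_mod_cast lt_of_lt_of_le one_pos (by exact_mod_cast hNR1)
  have hNR : (0:ℝ) < N := by linarith
  have hKN : K ≤ N := by
    have : (K:ℝ) ≤ N := by linarith
    exact_mod_cast this
  obtain ⟨N₁, hN1le, hN1ge⟩ : ∃ N₁ : ℕ, (N₁:ℝ) ≤ (N:ℝ)*δ₀/32 ∧ (N:ℝ)*δ₀/32 - 1 < (N₁:ℝ) :=
    ⟨⌊(N:ℝ)*δ₀/32⌋₊, Nat.floor_le (by positivity),
      by linarith [Nat.lt_floor_add_one ((N:ℝ)*δ₀/32)]⟩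
  have hN32 : 32/δ₀ ≤ (N:ℝ) := by linarith [Nat.cast_nonneg (α := ℝ) K]
  have hNδbig : (1:ℝ) ≤ (N:ℝ)*δ₀/32 := by
    rw [div_le_iff₀ hδ₀pos] at hN32
    rw [le_div_iff₀ (by norm_num : (0:ℝ) < 32)]
    linarith
  have hN1R : (0:ℝ) < N₁ := by linarith
  have hN1pos : 0 < N₁ := by exact_mod_cast hN1R
  have hN1N : N₁ ≤ N := by
    have h1 : (N₁:ℝ) ≤ (N:ℝ) := by nlinarith
    exact_mod_cast h1
  -- numeric conditions
  have hcond1 : 16*(K:ℝ)/N ≤ ε/2 := by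
    have h1 : 32*(K:ℝ)/ε ≤ N := by linarith [Nat.cast_nonneg (α := ℝ) K]
    have h2 := mul_le_mul_of_nonneg_left h1 hε.le
    have h3 : ε * (32*(K:ℝ)/ε) = 32*K := by field_simp
    rw [div_le_iff₀ hNR]
    nlinarith
  have hcond2 : 10*(K:ℝ)/N₁ ≤ ε/2 := by
    have h1 : 32*(20*(K:ℝ)/ε + 1)/δ₀ ≤ N := by linarith [Nat.cast_nonneg (α := ℝ) K]
    have h2 := mul_le_mul_of_nonneg_left h1 hδ₀pos.le
    have h3 : δ₀ * (32*(20*(K:ℝ)/ε + 1)/δ₀) = 32*(20*K/ε + 1) := by field_simp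
    have h4 : 20*(K:ℝ)/ε ≤ N₁ := by nlinarith
    have h5 := mul_le_mul_of_nonneg_left h4 hε.le
    have h6 : ε * (20*(K:ℝ)/ε) = 20*K := by field_simp
    rw [div_le_iff₀ hN1R]
    nlinarith
  refine ⟨K, N, hKpos, hN0, hKN, ?_⟩
  intro w hyp
  set u := w.re with hu
  set v := w.im with hv
  -- imaginary part bound
  have himN : ∀ m : ℕ, ((m:ℂ) * w).im = (m:ℝ) * v := by
    intro m; simp [Complex.mul_im, hv]
  have hreN : ∀ m : ℕ, ((m:ℂ) * w).re = (m:ℝ) * u := by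
    intro m; simp [Complex.mul_re, hu]
  have hvbound : (N:ℝ) * |v| < 2 := by
    have h1 := hyp N (by omega) le_rfl
    have h2 : ‖Complex.cos ((N:ℂ) * w)‖ ≤ r + 1 := by
      calc ‖Complex.cos ((N:ℂ)*w)‖
          = ‖(Complex.cos ((N:ℂ)*w) - 1) + 1‖ := by ring_nf
        _ ≤ ‖Complex.cos ((N:ℂ)*w) - 1‖ + ‖(1:ℂ)‖ :=
            norm_add_le _ _
        _ ≤ r + 1 := by simp only [norm_one]; linarith [h1]
    have h3 := ztl_sinh_le_abs_cos ((N:ℂ)*w)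
    rw [himN N] at h3
    have h4 : |(N:ℝ) * v| = (N:ℝ) * |v| := by
      rw [abs_mul, abs_of_nonneg (by positivity : (0:ℝ) ≤ (N:ℝ))]
    rw [h4] at h3
    by_contra hcon
    push_neg at hcon
    have h5 : Real.sinh 2 ≤ Real.sinh ((N:ℝ) * |v|) := Real.sinh_le_sinh.mpr hcon
    linarith [ztl_sinh_two_gt]
  have hvN : |v| ≤ 2/(N:ℝ) := by
    rw [le_div_iff₀ hNR]; nlinarith [abs_nonneg v]
  -- difference bound
  have hstep : ∀ m : ℕ, 1 ≤ m → m ≤ N →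
      ‖Complex.cos ((m:ℂ)*w) - Complex.cos (((m:ℝ)*u : ℝ):ℂ)‖ ≤ 16*(m:ℝ)/N := by
    intro m hm1 hmN
    have hmR : (m:ℝ) ≤ N := by exact_mod_cast hmN
    have hmR0 : (0:ℝ) ≤ m := by positivity
    have h1 := ztl_abs_cos_sub ((m:ℂ)*w)
    rw [himN m, hreN m] at h1
    have h2 : |(m:ℝ)*v| = (m:ℝ)*|v| := by rw [abs_mul, abs_of_nonneg hmR0]
    rw [h2] at h1
    have h3 : (m:ℝ)*|v| ≤ 2 := by nlinarith [abs_nonneg v]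
    have h4 : Real.exp ((m:ℝ)*|v|) - 1 ≤ 8*((m:ℝ)*|v|) :=
      ztl_exp_sub_one_le (by positivity) h3
    have h5 : 8*((m:ℝ)*|v|) ≤ 16*(m:ℝ)/N := by
      have := mul_le_mul_of_nonneg_left hvN (by positivity : (0:ℝ) ≤ 8*(m:ℝ))
      calc 8*((m:ℝ)*|v|) = 8*(m:ℝ)*|v| := by ring
        _ ≤ 8*(m:ℝ)*(2/(N:ℝ)) := this
        _ = 16*(m:ℝ)/N := by ring
    linarith
  -- real cosine lower bound
  have hcosu : ∀ m : ℕ, 1 ≤ m → m ≤ N₁ → -1 + δ₁ ≤ Real.cos ((m:ℝ)*u) := by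
    intro m hm1 hmN1
    have hmN : m ≤ N := le_trans hmN1 hN1N
    have h1 := hyp m hm1 hmN
    have h2 := hstep m hm1 hmN
    have h3 : 1 - Real.cos ((m:ℝ)*u) ≤ 16*(m:ℝ)/N + r := by
      have h4 := ztl_real_cos_dist ((m:ℝ)*u)
      have h5 : ‖Complex.cos (((m:ℝ)*u : ℝ):ℂ) - 1‖ ≤
          ‖Complex.cos (((m:ℝ)*u:ℝ):ℂ) - Complex.cos ((m:ℂ)*w)‖
          + ‖Complex.cos ((m:ℂ)*w) - 1‖ := by
        calc ‖Complex.cos (((m:ℝ)*u : ℝ):ℂ) - 1‖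
            = ‖(Complex.cos (((m:ℝ)*u:ℝ):ℂ) - Complex.cos ((m:ℂ)*w))
              + (Complex.cos ((m:ℂ)*w) - 1)‖ := by ring_nf
          _ ≤ _ := norm_add_le _ _
      rw [h4] at h5
      rw [norm_sub_rev] at h2
      linarith
    have h6 : 16*(m:ℝ)/N ≤ δ₀/2 := by
      have hm : (m:ℝ) ≤ N₁ := by exact_mod_cast hmN1
      rw [div_le_div_iff₀ hNR (by norm_num : (0:ℝ) < 2)]
      nlinarith
    simp only [hδ₁]
    linarith
  -- D bound
  have hD : ∀ m : ℕ, 1 ≤ m → m ≤ N₁ → ztlD ((m:ℝ) * (u/(2*Real.pi))) ≤ 1/2 - γ := by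
    intro m hm1 hmN1
    have h1 := ztl_D_le_of_cos_ge hδ₁pos (hcosu m hm1 hmN1)
    rw [hγdef]
    rw [show (m:ℝ) * (u/(2*Real.pi)) = ((m:ℝ)*u)/(2*Real.pi) by ring]
    exact h1
  have hDK := hstr (u/(2*Real.pi)) N₁ hN1pos hD
  -- conclude
  have hcosK : 1 - Real.cos ((K:ℝ)*u) ≤ 10*((K:ℝ)/N₁) := by
    have h1 := ztl_one_sub_cos_le ((K:ℝ)*u)
    rw [show ((K:ℝ)*u)/(2*Real.pi) = (K:ℝ) * (u/(2*Real.pi)) by ring] at h1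
    calc 1 - Real.cos ((K:ℝ)*u) ≤ 10 * ztlD ((K:ℝ) * (u/(2*Real.pi))) := h1
      _ ≤ 10*((K:ℝ)/N₁) := by linarith [hDK]
  have hfin1 := hstep K (by omega) hKN
  have hfin2 : ‖Complex.cos (((K:ℝ)*u : ℝ):ℂ) - 1‖ = 1 - Real.cos ((K:ℝ)*u) :=
    ztl_real_cos_dist _
  calc ‖Complex.cos ((K:ℂ)*w) - 1‖
      = ‖(Complex.cos ((K:ℂ)*w) - Complex.cos (((K:ℝ)*u:ℝ):ℂ))
        + (Complex.cos (((K:ℝ)*u:ℝ):ℂ) - 1)‖ := by ring_nf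
    _ ≤ ‖Complex.cos ((K:ℂ)*w) - Complex.cos (((K:ℝ)*u:ℝ):ℂ)‖
        + ‖Complex.cos (((K:ℝ)*u:ℝ):ℂ) - 1‖ := norm_add_le _ _
    _ ≤ 16*(K:ℝ)/N + (1 - Real.cos ((K:ℝ)*u)) := by rw [hfin2]; linarith [hfin1]
    _ ≤ ε/2 + ε/2 := by
        have h9 : 10*((K:ℝ)/N₁) = 10*(K:ℝ)/N₁ := by ring
        rw [h9] at hcosK
        linarith
    _ = ε := by ring
lemma ztl_commute_aeval {A : Type*} [NormedRing A] [NormedAlgebra ℂ A] (a : A)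
    (p : Polynomial ℂ) : a * Polynomial.aeval a p = Polynomial.aeval a p * a := by
  calc a * Polynomial.aeval a p = Polynomial.aeval a (Polynomial.X * p) := by
        rw [map_mul, Polynomial.aeval_X]
    _ = Polynomial.aeval a (p * Polynomial.X) := by rw [mul_comm]
    _ = Polynomial.aeval a p * a := by rw [map_mul, Polynomial.aeval_X]

lemma ztl_cheb {A : Type*} [NormedRing A] [NormedAlgebra ℂ A] {C : ℝ → A}
    (hC : IsCosineFunction C) (t : ℝ) :
    ∀ n : ℕ, C ((n:ℝ) * t) = Polynomial.aeval (C t) (Polynomial.Chebyshev.T ℂ (n:ℤ)) := by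
  intro n
  induction n using Nat.strong_induction_on with
  | _ n ih =>
    match n with
    | 0 => simpa using hC.1
    | 1 => simp
    | (m+2) =>
      have h1 : (((m+2 : ℕ)) : ℤ) = (m : ℤ) + 2 := by push_cast; ring
      have h2 := hC.2 (((m+1:ℕ):ℝ) * t) t
      have e1 : ((m+1:ℕ):ℝ)*t + t = ((m+2:ℕ):ℝ)*t := by push_cast; ring
      have e2 : ((m+1:ℕ):ℝ)*t - t = ((m:ℕ):ℝ)*t := by push_cast; ring
      rw [e1, e2] at h2
      have h3 : C (((m+2:ℕ):ℝ)*t) = 2 * C (((m+1:ℕ):ℝ)*t) * C t - C (((m:ℕ):ℝ)*t) := by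
        rw [eq_sub_iff_add_eq]; exact h2
      rw [h3, ih (m+1) (by omega), ih m (by omega), h1, Polynomial.Chebyshev.T_add_two]
      have h4 : ((m:ℤ) + 1) = ((m+1 : ℕ) : ℤ) := by push_cast; ring
      rw [map_sub, map_mul, map_mul, Polynomial.aeval_X, map_ofNat, h4]
      rw [mul_assoc, ← ztl_commute_aeval, ← mul_assoc]
set_option maxHeartbeats 1000000 in
theorem zero_two_law_spectral_radius {A : Type*} [NormedRing A] [NormedAlgebra ℂ A]
    [CompleteSpace A] (C : ℝ → A) (hC : IsCosineFunction C)
    (h : Filter.limsup (fun t : ℝ => spectralRadius ℂ (C t - 1)) (𝓝[≠] 0) < 2) :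
    Filter.limsup (fun t : ℝ => spectralRadius ℂ (C t - 1)) (𝓝[≠] 0) = 0 := by
  rcases subsingleton_or_nontrivial A with hA | hA
  · have hz : ∀ t : ℝ, spectralRadius ℂ (C t - 1) = 0 := by
      intro t
      have hempty : spectrum ℂ (C t - 1) = ∅ := by
        rw [Set.eq_empty_iff_forall_notMem]
        intro z hzz
        exact (spectrum.notMem_iff.mpr (isUnit_of_subsingleton _)) hzz
      unfold spectralRadius
      rw [hempty]
      simp
    simp only [hz]
    exact Filter.limsup_const 0
  -- nontrivial case
  obtain ⟨c, hc1, hc2⟩ := exists_between h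
  have hev : ∀ᶠ t in 𝓝[≠] (0:ℝ), spectralRadius ℂ (C t - 1) < c :=
    Filter.eventually_lt_of_limsup_lt hc1
  have hc2' : c ≠ ⊤ := ne_top_of_lt hc2
  set r := c.toReal with hrdef
  have hr2 : r < 2 := by
    have h1 := (ENNReal.toReal_lt_toReal hc2' (by norm_num : (2:ℝ≥0∞) ≠ ⊤)).mpr hc2
    simpa using h1
  have hr0 : 0 ≤ r := ENNReal.toReal_nonneg
  rw [eventually_nhdsWithin_iff, Metric.eventually_nhds_iff] at hev
  obtain ⟨δ, hδpos, hδ⟩ := hev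
  -- spectral mapping for subtraction of 1
  have hmapsub : ∀ t : ℝ, spectrum ℂ (C t - 1) = (fun k => k - 1) '' spectrum ℂ (C t) := by
    intro t
    have hne : (spectrum ℂ (C t)).Nonempty := spectrum.nonempty _
    have h1 := spectrum.map_polynomial_aeval_of_nonempty (𝕜 := ℂ) (C t)
      (Polynomial.X - Polynomial.C 1) hne
    have h2 : Polynomial.aeval (C t) (Polynomial.X - Polynomial.C (1:ℂ)) = C t - 1 := by
      rw [map_sub, Polynomial.aeval_X, Polynomial.aeval_C]
      simp
    have h3 : (fun k => Polynomial.eval k (Polynomial.X - Polynomial.C (1:ℂ)))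
        = fun k => k - 1 := by
      funext k; simp
    rw [h2, h3] at h1
    exact h1
  have key : ∀ t : ℝ, t ≠ 0 → |t| < δ → ∀ z ∈ spectrum ℂ (C t), ‖z - 1‖ ≤ r := by
    intro t ht htδ z hz
    have h1 : spectralRadius ℂ (C t - 1) < c := by
      apply hδ
      · rwa [Real.dist_eq, sub_zero]
      · simpa using ht
    have h2 : z - 1 ∈ spectrum ℂ (C t - 1) := by
      rw [hmapsub t]; exact ⟨z, hz, rfl⟩
    have h3 : (‖z-1‖₊ : ℝ≥0∞) ≤ spectralRadius ℂ (C t - 1) := by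
      unfold spectralRadius
      exact le_iSup₂ (f := fun k (_ : k ∈ spectrum ℂ (C t - 1)) => (‖k‖₊ : ℝ≥0∞)) (z-1) h2
    have h4 : (‖z-1‖₊ : ℝ≥0∞) ≤ c := le_trans h3 h1.le
    have h5 : ((‖z-1‖₊ : ℝ≥0∞)).toReal ≤ c.toReal :=
      ENNReal.toReal_mono hc2' h4
    simpa using h5
  have main : ∀ ε : ℝ, 0 < ε → ∀ᶠ t in 𝓝[≠] (0:ℝ),
      spectralRadius ℂ (C t - 1) ≤ ENNReal.ofReal ε := by
    intro ε hε
    obtain ⟨K, N, hK, hN, hKN, hsc⟩ := ztl_scalar hr0 hr2 hε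
    have hKR : (0:ℝ) < K := by exact_mod_cast hK
    have hNR : (0:ℝ) < N := by exact_mod_cast hN
    rw [eventually_nhdsWithin_iff, Metric.eventually_nhds_iff]
    refine ⟨δ*K/N, by positivity, ?_⟩
    intro t htd htne
    have ht0 : t ≠ 0 := by simpa using htne
    have htabs : |t| < δ*K/N := by rwa [Real.dist_eq, sub_zero] at htd
    set s := t / (K:ℝ) with hs
    have hts : t = (K:ℝ) * s := by rw [hs]; field_simp
    have hss : ∀ m : ℕ, 1 ≤ m → m ≤ N → ∀ z ∈ spectrum ℂ (C ((m:ℝ)*s)), ‖z - 1‖ ≤ r := by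
      intro m hm1 hmN
      have hmR : (0:ℝ) < m := by exact_mod_cast hm1
      have hmNR : (m:ℝ) ≤ N := by exact_mod_cast hmN
      apply key
      · exact mul_ne_zero (by positivity) (div_ne_zero ht0 (by positivity))
      · have habs : |(m:ℝ)*s| = (m:ℝ)*|t|/K := by
          rw [hs, abs_mul, abs_div, abs_of_nonneg hmR.le,
            abs_of_nonneg (by positivity : (0:ℝ) ≤ (K:ℝ))]
          ring
        rw [habs]
        have h1 : (m:ℝ)*|t| ≤ (N:ℝ)*|t| :=
          mul_le_mul_of_nonneg_right hmNR (abs_nonneg t)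
        have h2 : (N:ℝ)*|t| < (N:ℝ)*(δ*K/N) :=
          (mul_lt_mul_iff_right₀ hNR).mpr htabs
        have h3 : (N:ℝ)*(δ*K/N) = δ*K := by field_simp
        rw [div_lt_iff₀ hKR]
        nlinarith
    -- bound on the spectrum of C t - 1
    have hbound : ∀ z ∈ spectrum ℂ (C t - 1), (‖z‖₊ : ℝ≥0∞) ≤ ENNReal.ofReal ε := by
      intro z hzmem
      rw [hmapsub t] at hzmem
      obtain ⟨ζ, hζ, rfl⟩ := hzmem
      have hCt : C t = Polynomial.aeval (C s) (Polynomial.Chebyshev.T ℂ (K:ℤ)) := by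
        conv_lhs => rw [hts]
        exact ztl_cheb hC s K
      have hmap2 : spectrum ℂ (C t)
          = (fun k => Polynomial.eval k (Polynomial.Chebyshev.T ℂ (K:ℤ))) '' spectrum ℂ (C s) := by
        rw [hCt]
        exact spectrum.map_polynomial_aeval_of_nonempty _ _ (spectrum.nonempty _)
      rw [hmap2] at hζ
      obtain ⟨ξ, hξ, hξeval⟩ := hζ
      obtain ⟨wc, hwc⟩ := Complex.cos_surjective ξ
      have hcosm : ∀ m : ℕ, 1 ≤ m → m ≤ N →
          ‖Complex.cos ((m:ℂ)*wc) - 1‖ ≤ r := by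
        intro m hm1 hmN
        have h5 : Polynomial.eval ξ (Polynomial.Chebyshev.T ℂ (m:ℤ))
            ∈ spectrum ℂ (C ((m:ℝ)*s)) := by
          rw [ztl_cheb hC s m,
            spectrum.map_polynomial_aeval_of_nonempty _ _ (spectrum.nonempty _)]
          exact ⟨ξ, hξ, rfl⟩
        have h6 := hss m hm1 hmN _ h5
        have h7 : Polynomial.eval ξ (Polynomial.Chebyshev.T ℂ (m:ℤ))
            = Complex.cos ((m:ℂ)*wc) := by
          rw [← hwc, Polynomial.Chebyshev.T_complex_cos]
          norm_num
        rw [h7] at h6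
        exact h6
      have h8 := hsc wc hcosm
      have h9 : Complex.cos ((K:ℂ)*wc) = ζ := by
        rw [← hξeval, ← hwc]
        beta_reduce
        rw [Polynomial.Chebyshev.T_complex_cos]
        norm_num
      rw [← ENNReal.ofReal_coe_nnreal]
      apply ENNReal.ofReal_le_ofReal
      rw [← h9]
      exact h8
    unfold spectralRadius
    exact iSup₂_le hbound
  -- conclude: limsup ≤ ε for all ε > 0
  have hlim : ∀ ε : ℝ, 0 < ε →
      Filter.limsup (fun t : ℝ => spectralRadius ℂ (C t - 1)) (𝓝[≠] 0)
        ≤ ENNReal.ofReal ε := by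
    intro ε hε
    exact Filter.limsup_le_of_le (by isBoundedDefault) (main ε hε)
  refine le_antisymm ?_ zero_le
  refine ENNReal.le_of_forall_pos_le_add ?_
  intro ε hε _
  rw [zero_add]
  calc Filter.limsup (fun t : ℝ => spectralRadius ℂ (C t - 1)) (𝓝[≠] 0)
      ≤ ENNReal.ofReal ((ε:ℝ≥0):ℝ) := hlim _ (by exact_mod_cast hε)
    _ = (ε : ℝ≥0∞) := ENNReal.ofReal_coe_nnreal
end

section
/- Let A be a complex unital Banach algebra and let (C(t))_{t∈ℝ} be a cosine function in A. Fix t ∈ ℝ and assume that ‖C(t) − 1_A‖ ≤ 2 and that ρ(C(t/2) − 1_A) < 1, where ρ denotes the spectral radius. Then C(t/2) = √(1_A − (1_A − C(t))/2), where the square root is given by the binomial series. -/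
open Filter Topology
open scoped ENNReal NNReal

/-- The generalized binomial coefficient `binom (1/2) n`. -/
noncomputable def binomHalf (n : ℕ) : ℝ :=
  (∏ k ∈ Finset.range n, ((1 : ℝ) / 2 - k)) / n.factorial

/-- The square root `√(1 - x)` defined by the binomial series
`∑ binom (1/2) n • (-x)^n`. -/
noncomputable def sqrtOneSub {A : Type*} [NormedRing A] [NormedAlgebra ℂ A]
    [CompleteSpace A] (x : A) : A :=
  ∑' n : ℕ, binomHalf n • (-x) ^ n

section BinomHalfLemmas

open Finset

lemma binomHalf_zero : binomHalf 0 = 1 := by simp [binomHalf]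
lemma binomHalf_one : binomHalf 1 = 1/2 := by simp [binomHalf]

lemma binomHalf_rec (n : ℕ) :
    (n + 1 : ℝ) * binomHalf (n + 1) = (1/2 - n) * binomHalf n := by
  have h1 : (n.factorial : ℝ) ≠ 0 := Nat.cast_ne_zero.mpr n.factorial_ne_zero
  have h2 : ((n+1 : ℕ).factorial : ℝ) ≠ 0 := Nat.cast_ne_zero.mpr (n+1).factorial_ne_zero
  simp only [binomHalf, Finset.prod_range_succ, Nat.factorial_succ, Nat.cast_mul,
    Nat.cast_add, Nat.cast_one]
  field_simp

lemma binomHalf_abs_rec {n : ℕ} (hn : 1 ≤ n) :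
    (n + 1 : ℝ) * |binomHalf (n + 1)| = (n - 1/2) * |binomHalf n| := by
  have h := binomHalf_rec n
  have h1 : (1 ≤ (n:ℝ)) := by exact_mod_cast hn
  have := congrArg abs h
  rw [abs_mul, abs_mul, abs_of_nonneg (by positivity : (0:ℝ) ≤ (n:ℝ)+1)] at this
  rw [this, abs_of_nonpos (by linarith : (1/2 - (n:ℝ)) ≤ 0)]
  ring

lemma binomHalf_sum_abs_tail (N : ℕ) :
    ∑ n ∈ range N, |binomHalf (n+1)| = 1 - 2*(N+1)*|binomHalf (N+1)| := by
  induction N with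
  | zero =>
    rw [Finset.sum_range_zero]
    rw [show (0:ℕ)+1 = 1 from rfl, binomHalf_one]
    norm_num [abs_of_nonneg]
  | succ N ih =>
    rw [Finset.sum_range_succ, ih]
    have h := binomHalf_abs_rec (n := N+1) (by omega)
    push_cast at h ⊢
    linarith

lemma binomHalf_tail_sum_le (N : ℕ) : ∑ n ∈ range N, |binomHalf (n+1)| ≤ 1 := by
  rw [binomHalf_sum_abs_tail]
  have : (0:ℝ) ≤ 2*(N+1)*|binomHalf (N+1)| := by positivity
  linarith

lemma binomHalf_summable_abs_tail : Summable (fun n => |binomHalf (n+1)|) :=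
  summable_of_sum_range_le (fun _ => abs_nonneg _) binomHalf_tail_sum_le

lemma binomHalf_summable_abs : Summable (fun n => |binomHalf n|) :=
  (summable_nat_add_iff 1).mp binomHalf_summable_abs_tail

lemma binomHalf_tsum_abs_tail_le : ∑' n, |binomHalf (n+1)| ≤ 1 :=
  Real.tsum_le_of_sum_range_le (fun _ => abs_nonneg _) binomHalf_tail_sum_le

/-- The convolution of the sequence `binomHalf` with itself. -/
noncomputable def dconv (n : ℕ) : ℝ := ∑ i ∈ range (n+1), binomHalf i * binomHalf (n-i)

lemma dconv_sym (n : ℕ) :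
    2 * ∑ i ∈ range (n+1), (i:ℝ) * (binomHalf i * binomHalf (n-i)) = n * dconv n := by
  have hrefl := Finset.sum_range_reflect
    (fun i => (i:ℝ) * (binomHalf i * binomHalf (n-i))) (n+1)
  simp only [Nat.add_sub_cancel] at hrefl
  have key : ∑ i ∈ range (n+1), ((n - i : ℕ):ℝ) * (binomHalf (n-i) * binomHalf (n-(n-i)))
      = ∑ i ∈ range (n+1), (i:ℝ) * (binomHalf i * binomHalf (n-i)) := hrefl
  have key2 : ∑ i ∈ range (n+1), ((n:ℝ) - i) * (binomHalf i * binomHalf (n-i))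
      = ∑ i ∈ range (n+1), (i:ℝ) * (binomHalf i * binomHalf (n-i)) := by
    rw [← key]
    apply Finset.sum_congr rfl
    intro i hi
    have hi' : i ≤ n := by simpa [Nat.lt_succ_iff] using hi
    rw [Nat.sub_sub_self hi', Nat.cast_sub hi', mul_comm (binomHalf (n-i)) (binomHalf i)]
  have expand : ∑ i ∈ range (n+1), ((n:ℝ)) * (binomHalf i * binomHalf (n-i))
      = ∑ i ∈ range (n+1), (((n:ℝ) - i) * (binomHalf i * binomHalf (n-i))
        + (i:ℝ) * (binomHalf i * binomHalf (n-i))) := by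
    apply Finset.sum_congr rfl; intro i _; ring
  rw [Finset.sum_add_distrib, key2] at expand
  have hn : ∑ i ∈ range (n+1), (n:ℝ) * (binomHalf i * binomHalf (n-i)) = n * dconv n := by
    rw [dconv, Finset.mul_sum]
  rw [hn] at expand
  linarith [expand]

lemma dconv_rec (n : ℕ) : (n + 1 : ℝ) * dconv (n+1) = (1 - n) * dconv n := by
  have hsym1 := dconv_sym (n+1)
  have hsym0 := dconv_sym n
  have hshift : ∑ i ∈ range (n+2), (i:ℝ) * (binomHalf i * binomHalf (n+1-i))
      = ∑ k ∈ range (n+1), ((k+1 : ℕ):ℝ) * (binomHalf (k+1) * binomHalf (n-k)) := by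
    rw [Finset.sum_range_succ' (fun i => (i:ℝ) * (binomHalf i * binomHalf (n+1-i))) (n+1)]
    simp
  have hterm : ∀ k : ℕ, ((k+1 : ℕ):ℝ) * (binomHalf (k+1) * binomHalf (n-k))
      = (1/2 - k) * binomHalf k * binomHalf (n-k) := by
    intro k
    have hk := binomHalf_rec k
    push_cast
    calc ((k:ℝ)+1) * (binomHalf (k+1) * binomHalf (n-k))
        = (((k:ℝ)+1) * binomHalf (k+1)) * binomHalf (n-k) := by ring
      _ = ((1/2 - k) * binomHalf k) * binomHalf (n-k) := by rw [hk]
      _ = (1/2 - (k:ℝ)) * binomHalf k * binomHalf (n-k) := by ring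
  have hsum : ∑ k ∈ range (n+1), ((k+1 : ℕ):ℝ) * (binomHalf (k+1) * binomHalf (n-k))
      = (1/2) * dconv n - ∑ k ∈ range (n+1), (k:ℝ) * (binomHalf k * binomHalf (n-k)) := by
    rw [show (1/2 : ℝ) * dconv n = ∑ k ∈ range (n+1), (1/2) * (binomHalf k * binomHalf (n-k)) by
      rw [dconv, Finset.mul_sum]]
    rw [← Finset.sum_sub_distrib]
    apply Finset.sum_congr rfl; intro k _
    rw [hterm k]; push_cast; ring
  rw [hshift, hsum] at hsym1
  push_cast at hsym1 hsym0 ⊢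
  linarith

lemma dconv_zero : dconv 0 = 1 := by simp [dconv, binomHalf_zero]

lemma dconv_one : dconv 1 = 1 := by
  simp [dconv, Finset.sum_range_succ, binomHalf_zero, binomHalf_one]
  norm_num

lemma dconv_eq_zero {n : ℕ} (hn : 2 ≤ n) : dconv n = 0 := by
  induction n with
  | zero => omega
  | succ m ih =>
    rcases Nat.lt_or_ge m 2 with hm | hm
    · interval_cases m
      · omega
      · have h := dconv_rec 1
        rw [dconv_one] at h
        push_cast at h
        linarith
    · have h := dconv_rec m
      rw [ih hm, mul_zero] at h
      have hpos : ((m:ℝ) + 1) ≠ 0 := by positivity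
      exact (mul_eq_zero.mp h).resolve_left hpos

end BinomHalfLemmas

section BanachAlg

open Finset

variable {A : Type*} [NormedRing A] [NormedAlgebra ℂ A] [CompleteSpace A]

lemma norm_term_le {x : A} (hx : ‖x‖ ≤ 1) (n : ℕ) :
    ‖binomHalf n • (-x) ^ n‖ ≤ |binomHalf n| * max 1 ‖(1:A)‖ := by
  rw [norm_smul, Real.norm_eq_abs]
  gcongr
  cases n with
  | zero => simpa using le_max_right 1 ‖(1:A)‖
  | succ m =>
    refine le_trans (norm_pow_le' (-x) (Nat.succ_pos m)) (le_trans ?_ (le_max_left 1 _))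
    rw [norm_neg]
    exact pow_le_one₀ (norm_nonneg x) hx

lemma summable_norm_term {x : A} (hx : ‖x‖ ≤ 1) :
    Summable (fun n => ‖binomHalf n • (-x) ^ n‖) :=
  Summable.of_nonneg_of_le (fun _ => norm_nonneg _) (norm_term_le hx)
    (binomHalf_summable_abs.mul_right _)

lemma summable_term {x : A} (hx : ‖x‖ ≤ 1) :
    Summable (fun n => binomHalf n • (-x) ^ n) :=
  (summable_norm_term hx).of_norm

lemma sqrtOneSub_sq {x : A} (hx : ‖x‖ ≤ 1) : sqrtOneSub x * sqrtOneSub x = 1 - x := by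
  rw [sqrtOneSub, tsum_mul_tsum_eq_tsum_sum_antidiagonal_of_summable_norm
    (summable_norm_term hx) (summable_norm_term hx)]
  have hinner : ∀ n : ℕ, ∑ kl ∈ antidiagonal n,
      (binomHalf kl.1 • (-x) ^ kl.1) * (binomHalf kl.2 • (-x) ^ kl.2) = dconv n • (-x) ^ n := by
    intro n
    have : ∀ kl ∈ antidiagonal n,
        (binomHalf kl.1 • (-x) ^ kl.1) * (binomHalf kl.2 • (-x) ^ kl.2)
        = (binomHalf kl.1 * binomHalf kl.2) • (-x) ^ n := by
      intro kl hkl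
      rw [smul_mul_smul_comm, ← pow_add, (Finset.HasAntidiagonal.mem_antidiagonal.mp hkl)]
    rw [Finset.sum_congr rfl this, ← Finset.sum_smul, dconv,
      ← Finset.Nat.sum_antidiagonal_eq_sum_range_succ (fun i j => binomHalf i * binomHalf j)]
  rw [tsum_congr hinner]
  rw [tsum_eq_sum (s := Finset.range 2) (by
    intro n hn
    have : 2 ≤ n := by simp [Finset.mem_range] at hn; omega
    rw [dconv_eq_zero this, zero_smul])]
  rw [Finset.sum_range_succ, Finset.sum_range_one, dconv_zero, dconv_one, pow_zero, pow_one,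
    one_smul, one_smul]
  rw [sub_eq_add_neg]

lemma sqrtOneSub_norm_sub_one {x : A} (hx : ‖x‖ ≤ 1) : ‖sqrtOneSub x - 1‖ ≤ 1 := by
  have h0 : sqrtOneSub x = 1 + ∑' n, binomHalf (n+1) • (-x) ^ (n+1) := by
    rw [sqrtOneSub, (summable_term hx).tsum_eq_zero_add, binomHalf_zero, pow_zero, one_smul]
  rw [h0, add_sub_cancel_left]
  have hb : ∀ n : ℕ, ‖binomHalf (n+1) • (-x) ^ (n+1)‖ ≤ |binomHalf (n+1)| := by
    intro n
    rw [norm_smul, Real.norm_eq_abs]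
    calc |binomHalf (n+1)| * ‖(-x)^(n+1)‖ ≤ |binomHalf (n+1)| * 1 := by
          gcongr
          refine le_trans (norm_pow_le' (-x) (Nat.succ_pos n)) ?_
          rw [norm_neg]; exact pow_le_one₀ (norm_nonneg x) hx
      _ = |binomHalf (n+1)| := mul_one _
  calc ‖∑' n, binomHalf (n+1) • (-x) ^ (n+1)‖ ≤ ∑' n, ‖binomHalf (n+1) • (-x) ^ (n+1)‖ :=
        norm_tsum_le_tsum_norm ((summable_norm_term hx).comp_injective (add_left_injective 1))
    _ ≤ ∑' n, |binomHalf (n+1)| :=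
        Summable.tsum_le_tsum hb ((summable_norm_term hx).comp_injective (add_left_injective 1))
          binomHalf_summable_abs_tail
    _ ≤ 1 := binomHalf_tsum_abs_tail_le

lemma commute_sqrtOneSub {x y : A} (hx : ‖x‖ ≤ 1) (h : Commute y x) :
    Commute y (sqrtOneSub x) := by
  unfold Commute SemiconjBy
  rw [sqrtOneSub, ← (summable_term hx).tsum_mul_left, ← (summable_term hx).tsum_mul_right]
  exact tsum_congr fun n => ((h.neg_right.pow_right n).smul_right (binomHalf n)).eq

lemma exists_geom_bound {v : A} (h : spectralRadius ℂ v < 1) :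
    ∃ r M : ℝ, 0 < r ∧ r < 1 ∧ 0 ≤ M ∧ ∀ m, ‖v ^ m‖ ≤ M * r ^ m := by
  obtain ⟨c, hc1, hc2⟩ := exists_between h
  have hc0 : c ≠ 0 := fun hc => (not_lt_of_ge zero_le) (hc ▸ hc1)
  have hcne : c ≠ ⊤ := (hc2.trans ENNReal.one_lt_top).ne
  set r := c.toReal with hrdef
  have hr0 : 0 < r := ENNReal.toReal_pos hc0 hcne
  have hr1 : r < 1 := by
    have := (ENNReal.toReal_lt_toReal hcne ENNReal.one_ne_top).mpr hc2
    simpa using this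
  have hev : ∀ᶠ n : ℕ in atTop, (‖v ^ n‖₊ : ℝ≥0∞) ^ (1/(n:ℝ)) < c :=
    (spectrum.pow_nnnorm_pow_one_div_tendsto_nhds_spectralRadius v).eventually_lt_const hc1
  obtain ⟨N₀, hN₀⟩ := eventually_atTop.mp hev
  set K := max N₀ 1 with hKdef
  have hgood : ∀ n, K ≤ n → ‖v ^ n‖ ≤ r ^ n := by
    intro n hn
    have hn1 : 1 ≤ n := le_trans (le_max_right _ _) hn
    have hnN : N₀ ≤ n := le_trans (le_max_left _ _) hn
    have h1 : (‖v ^ n‖₊ : ℝ≥0∞) ^ (1/(n:ℝ)) ≤ c := (hN₀ n hnN).le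
    have h2 : ((‖v ^ n‖₊ : ℝ≥0∞) ^ (1/(n:ℝ))) ^ (n:ℝ) ≤ c ^ (n:ℝ) :=
      ENNReal.rpow_le_rpow h1 (Nat.cast_nonneg n)
    rw [← ENNReal.rpow_mul, one_div,
      inv_mul_cancel₀ (by positivity : (n:ℝ) ≠ 0), ENNReal.rpow_one] at h2
    have h3 : (‖v ^ n‖₊ : ℝ≥0∞) ≤ c ^ n := by
      rwa [← ENNReal.rpow_natCast c n]
    have h4 := ENNReal.toReal_mono (ENNReal.pow_ne_top hcne) h3
    rwa [ENNReal.coe_toReal, coe_nnnorm, ENNReal.toReal_pow] at h4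
  set S := ∑ k ∈ range K, ‖v ^ k‖ with hSdef
  have hS0 : 0 ≤ S := Finset.sum_nonneg fun _ _ => norm_nonneg _
  refine ⟨r, S / r ^ K + 1, hr0, hr1, by positivity, fun m => ?_⟩
  rcases lt_or_ge m K with hm | hm
  · have h1 : ‖v ^ m‖ ≤ S :=
      Finset.single_le_sum (f := fun k => ‖v ^ k‖) (fun _ _ => norm_nonneg _)
        (Finset.mem_range.mpr hm)
    have h2 : r ^ K ≤ r ^ m := pow_le_pow_of_le_one hr0.le hr1.le hm.le
    have h3 : (S / r ^ K) * r ^ K ≤ (S / r ^ K) * r ^ m :=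
      mul_le_mul_of_nonneg_left h2 (by positivity)
    rw [div_mul_cancel₀ _ (by positivity : (r:ℝ) ^ K ≠ 0)] at h3
    have h4 : (0:ℝ) ≤ r ^ m := by positivity
    calc ‖v ^ m‖ ≤ S := h1
      _ ≤ (S / r ^ K) * r ^ m := h3
      _ ≤ (S / r ^ K + 1) * r ^ m := by nlinarith
  · have h1 := hgood m hm
    have h5 : (1:ℝ) * r ^ m ≤ (S / r ^ K + 1) * r ^ m := by
      apply mul_le_mul_of_nonneg_right _ (by positivity)
      have : (0:ℝ) ≤ S / r ^ K := by positivity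
      linarith
    rw [one_mul] at h5
    exact h1.trans h5

end BanachAlg

theorem half_formula {A : Type*} [NormedRing A] [NormedAlgebra ℂ A]
    [CompleteSpace A] (C : ℝ → A) (hC : IsCosineFunction C) (t : ℝ)
    (h1 : ‖C t - 1‖ ≤ 2)
    (h2 : spectralRadius ℂ (C (t / 2) - 1) < 1) :
    C (t / 2) = sqrtOneSub (((1 : ℝ) / 2) • (1 - C t)) := by
  obtain ⟨hC0, hCadd⟩ := hC
  set y := C (t/2) with hydef
  set x : A := ((1:ℝ)/2) • (1 - C t) with hxdef
  -- the cosine functional equation at s = t = t/2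
  have hcos := hCadd (t/2) (t/2)
  rw [show t/2 + t/2 = t by ring, sub_self, hC0] at hcos
  -- hcos : C t + 1 = 2 * y * y
  have hCt : C t = 2 * y * y - 1 := eq_sub_of_add_eq hcos
  have hsq : 1 - C t = (1 - y*y) + (1 - y*y) := by rw [hCt]; noncomm_ring
  have hyy : y * y = 1 - x := by
    rw [hxdef, hsq, smul_add, ← add_smul]
    norm_num [sub_sub_cancel]
  -- the norm bound on x
  have hx : ‖x‖ ≤ 1 := by
    rw [hxdef, norm_smul, Real.norm_eq_abs]
    have he : ‖(1:A) - C t‖ = ‖C t - 1‖ := by rw [← norm_neg, neg_sub]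
    rw [he, abs_of_nonneg (by norm_num : (0:ℝ) ≤ 1/2)]
    linarith
  -- commutation
  have hcyx : Commute y x := by
    have h1' : Commute y (y * y) := (Commute.refl y).mul_right (Commute.refl y)
    have h2' : Commute y (1 - C t) := by
      rw [hsq]
      exact ((Commute.one_right y).sub_right h1').add_right ((Commute.one_right y).sub_right h1')
    exact h2'.smul_right _
  set s : A := sqrtOneSub x with hsdef
  have hss : s * s = 1 - x := sqrtOneSub_sq hx
  have hys : Commute y s := commute_sqrtOneSub hx hcyx
  set u : A := s - y with hudef
  have hu0 : u * (s + y) = 0 := by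
    have hexp : (s - y) * (s + y) = s*s - y*y + (s*y - y*s) := by noncomm_ring
    rw [hudef, hexp, hss, hyy, hys.eq]
    simp
  set w : A := ((1:ℝ)/2) • ((1 - s) + (1 - y)) with hwdef
  have huw : u * w = u := by
    have hx1 : u * ((1-s)+(1-y)) = u + u - u * (s + y) := by noncomm_ring
    rw [hu0, sub_zero] at hx1
    rw [hwdef, mul_smul_comm, hx1, smul_add, ← add_smul]
    norm_num
  have hn : ∀ n, u * w ^ n = u := by
    intro n
    induction n with
    | zero => simp
    | succ k ih => rw [pow_succ, ← mul_assoc, ih, huw]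
  -- geometric bound
  set a : A := 1 - s with hadef
  set b : A := 1 - y with hbdef
  have ha : ‖a‖ ≤ 1 := by
    have := sqrtOneSub_norm_sub_one hx
    rwa [← norm_neg, neg_sub] at this
  have hab : Commute a b := by
    have c2 : Commute s (1 - y) := (Commute.one_right s).sub_right hys.symm
    exact (Commute.one_left (1 - y)).sub_left c2
  obtain ⟨r, M, hr0, hr1, hM0, hbd⟩ := exists_geom_bound h2
  have hbpow : ∀ m, ‖b ^ m‖ ≤ M * r ^ m := by
    intro m
    have hbeq : b = -(y - 1) := by rw [hbdef, neg_sub]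
    have hnorm : ‖b ^ m‖ = ‖(y - 1) ^ m‖ := by
      rw [hbeq]
      rcases Nat.even_or_odd m with he | ho
      · rw [he.neg_pow]
      · rw [ho.neg_pow, norm_neg]
    rw [hnorm]
    exact hbd m
  have hq : ∀ n, ‖w ^ n‖ ≤ M * ((1+r)/2) ^ n := by
    intro n
    have hw' : w ^ n = ((1:ℝ)/2)^n • (a + b) ^ n := by
      rw [hwdef, smul_pow, hadef, hbdef]
    rw [hw', norm_smul, Real.norm_eq_abs, abs_pow, abs_of_nonneg (by norm_num : (0:ℝ) ≤ 1/2)]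
    have hbound : ‖(a + b) ^ n‖ ≤ ∑ k ∈ Finset.range (n+1), (n.choose k : ℝ) * (M * r^(n-k)) := by
      rw [hab.add_pow n]
      refine le_trans (norm_sum_le _ _) (Finset.sum_le_sum ?_)
      intro k _
      have hcast : a^k * b^(n-k) * ((n.choose k : ℕ) : A) = (n.choose k) • (a^k * b^(n-k)) := by
        rw [nsmul_eq_mul, (Nat.cast_commute _ _).eq]
      rw [hcast]
      refine le_trans norm_nsmul_le ?_
      have hax : ‖a^k * b^(n-k)‖ ≤ M * r^(n-k) := by
        cases k with
        | zero => simpa [pow_zero, one_mul] using hbpow n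
        | succ j =>
          calc ‖a^(j+1) * b^(n-(j+1))‖ ≤ ‖a^(j+1)‖ * ‖b^(n-(j+1))‖ := norm_mul_le _ _
            _ ≤ 1 * (M * r^(n-(j+1))) := by
                apply mul_le_mul _ (hbpow _) (norm_nonneg _) zero_le_one
                refine le_trans (norm_pow_le' a (Nat.succ_pos j)) ?_
                exact pow_le_one₀ (norm_nonneg a) ha
            _ = M * r^(n-(j+1)) := one_mul _
      exact mul_le_mul_of_nonneg_left hax (Nat.cast_nonneg _)
    have hsum : ∑ k ∈ Finset.range (n+1), (n.choose k : ℝ) * (M * r^(n-k)) = M * (1+r)^n := by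
      rw [add_pow 1 r n, Finset.mul_sum]
      apply Finset.sum_congr rfl
      intro k _
      rw [one_pow]
      ring
    calc (1/2:ℝ)^n * ‖(a + b)^n‖ ≤ (1/2:ℝ)^n * (M * (1+r)^n) := by
          rw [← hsum]; exact mul_le_mul_of_nonneg_left hbound (by positivity)
      _ = M * ((1+r)/2)^n := by
          rw [show (1+r)/2 = (1+r)*(1/2) by ring, mul_pow]; ring
  -- conclude u = 0
  have hq01 : (0:ℝ) ≤ (1+r)/2 := by linarith
  have hq1 : (1+r)/2 < 1 := by linarith
  have htend : Filter.Tendsto (fun n : ℕ => ‖u‖ * (M * ((1+r)/2)^n)) Filter.atTop (𝓝 0) := by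
    have h0 := tendsto_pow_atTop_nhds_zero_of_lt_one hq01 hq1
    have := h0.const_mul (‖u‖ * M)
    simpa [mul_assoc] using this
  have hub : ∀ n : ℕ, ‖u‖ ≤ ‖u‖ * (M * ((1+r)/2)^n) := by
    intro n
    calc ‖u‖ = ‖u * w^n‖ := by rw [hn n]
      _ ≤ ‖u‖ * ‖w^n‖ := norm_mul_le _ _
      _ ≤ ‖u‖ * (M * ((1+r)/2)^n) := mul_le_mul_of_nonneg_left (hq n) (norm_nonneg u)
  have hule : ‖u‖ ≤ 0 := ge_of_tendsto htend (Filter.Eventually.of_forall hub)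
  have hu : u = 0 := norm_le_zero_iff.mp hule
  have hsy' : s = y := by rwa [hudef, sub_eq_zero] at hu
  exact hsy'.symm
end

section
/- Let z ∈ ℂ. If sup_{n ≥ 1} |cos(n z)| < ∞, then Im(z) = 0, i.e. z is real; consequently cos(z) ∈ [−1, 1]. -/
open Filter Topology

lemma sinh_abs_im_le_abs_cos (w : ℂ) :
    Real.sinh |w.im| ≤ ‖Complex.cos w‖ := by
  have h1 : ‖Complex.exp (w * Complex.I)‖ = Real.exp (-w.im) := by
    rw [Complex.norm_exp]; simp
  have h2 : ‖Complex.exp (-w * Complex.I)‖ = Real.exp w.im := by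
    rw [Complex.norm_exp]; simp
  have hcos : Complex.cos w = (Complex.exp (w * Complex.I) + Complex.exp (-w * Complex.I)) / 2 :=
    rfl
  have habs : ‖Complex.cos w‖
      = ‖Complex.exp (w * Complex.I) + Complex.exp (-w * Complex.I)‖ / 2 := by
    rw [hcos, norm_div]; norm_num
  have tri : ∀ a b : ℂ, ‖a‖ - ‖b‖ ≤ ‖a + b‖ := by
    intro a b
    have := norm_sub_norm_le a (-b)
    simpa [sub_neg_eq_add] using this
  rw [habs, Real.sinh_eq]
  have key : Real.exp |w.im| - Real.exp (-|w.im|)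
      ≤ ‖Complex.exp (w * Complex.I) + Complex.exp (-w * Complex.I)‖ := by
    rcases abs_cases w.im with ⟨he, _⟩ | ⟨he, _⟩
    · calc Real.exp |w.im| - Real.exp (-|w.im|)
          = ‖Complex.exp (-w * Complex.I)‖
            - ‖Complex.exp (w * Complex.I)‖ := by rw [h1, h2, he]
        _ ≤ _ := by
            have := tri (Complex.exp (-w * Complex.I)) (Complex.exp (w * Complex.I))
            rwa [add_comm] at this
    · calc Real.exp |w.im| - Real.exp (-|w.im|)
          = ‖Complex.exp (w * Complex.I)‖
            - ‖Complex.exp (-w * Complex.I)‖ := by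
            rw [h1, h2, he]; ring_nf
        _ ≤ _ := tri _ _
  linarith

/-- If the values `cos (n z)`, `n ≥ 1`, are bounded, then `z` is real, and
consequently `cos z` lies in the real interval `[-1, 1]`. -/
theorem bounded_cos_multiples_real (z : ℂ)
    (h : ∃ M : ℝ, ∀ n : ℕ, 1 ≤ n → ‖Complex.cos (n * z)‖ ≤ M) :
    z.im = 0 ∧ ∃ r ∈ Set.Icc (-1 : ℝ) 1, Complex.cos z = (r : ℂ) := by
  obtain ⟨M, hM⟩ := h
  have him : z.im = 0 := by
    by_contra hy
    have hy' : 0 < |z.im| := abs_pos.mpr hy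
    obtain ⟨n, hn⟩ := exists_nat_gt (max 1 (M / |z.im|))
    have hn1 : 1 ≤ n := by
      have : (1 : ℝ) < n := lt_of_le_of_lt (le_max_left _ _) hn
      exact_mod_cast this.le
    have hbound := hM n hn1
    have hl : Real.sinh |((n : ℂ) * z).im| ≤ ‖Complex.cos (n * z)‖ :=
      sinh_abs_im_le_abs_cos _
    have him' : ((n : ℂ) * z).im = n * z.im := by simp
    have hgt : M < n * |z.im| := by
      have : M / |z.im| < n := lt_of_le_of_lt (le_max_right _ _) hn
      calc M = (M / |z.im|) * |z.im| := by field_simp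
        _ < n * |z.im| := by exact mul_lt_mul_of_pos_right this hy'
    have habs : |((n : ℂ) * z).im| = n * |z.im| := by
      rw [him', abs_mul, Nat.abs_cast]
    have hs : n * |z.im| ≤ Real.sinh (n * |z.im|) := by
      rw [Real.self_le_sinh_iff]
      positivity
    rw [habs] at hl
    linarith
  refine ⟨him, Real.cos z.re, ⟨Real.neg_one_le_cos _, Real.cos_le_one _⟩, ?_⟩
  have hz : z = (z.re : ℂ) := by
    apply Complex.ext <;> simp [him]
  rw [hz, ← Complex.ofReal_cos]
  simp
end

section
/- Let A be a complex unital Banach algebra, let (C(t))_{t∈ℝ} be a cosine function in A, and suppose η > 0 is such that for every t with |t| ≤ η one has ‖C(t) − 1_A‖ ≤ 2 and ρ(C(t/2) − 1_A) < 1, where ρ denotes the spectral radius. Then for every t with |t| ≤ η, ‖C(t/2) − 1_A‖ ≤ 1 − √(1 − ‖C(t) − 1_A‖/2), where √ denotes the nonnegative real square root. -/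
open Filter Topology
open scoped ENNReal NNReal

namespace CosAux

noncomputable def a : ℕ → ℝ
  | 0 => 0
  | 1 => 1/2
  | (n+2) => (1/2) * ∑ i ∈ (Finset.range (n+1)).attach, a (i.1+1) * a (n+1-i.1)
  decreasing_by
  · have := i.2; simp only [Finset.mem_range] at this; omega
  · omega

lemma a_zero : a 0 = 0 := by simp [a]
lemma a_one : a 1 = 1/2 := by simp [a]
lemma a_two_add (n : ℕ) :
    a (n+2) = (1/2) * ∑ i ∈ Finset.range (n+1), a (i+1) * a (n+1-i) := by
  rw [a, ← Finset.sum_attach (Finset.range (n+1)) (fun i => a (i+1) * a (n+1-i))]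

lemma a_nonneg : ∀ n, 0 ≤ a n := by
  intro n
  induction n using Nat.strong_induction_on with
  | _ n ih =>
    match n with
    | 0 => simp [a_zero]
    | 1 => norm_num [a_one]
    | (m+2) =>
      rw [a_two_add]
      have : 0 ≤ ∑ i ∈ Finset.range (m+1), a (i+1) * a (m+1-i) := by
        apply Finset.sum_nonneg
        intro i hi
        simp only [Finset.mem_range] at hi
        exact mul_nonneg (ih _ (by omega)) (ih _ (by omega))
      linarith

lemma a_antidiagonal (n : ℕ) :
    ∑ p ∈ Finset.HasAntidiagonal.antidiagonal n, a p.1 * a p.2 = 2 * a n - (if n = 1 then 1 else 0) := by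
  rw [Finset.Nat.sum_antidiagonal_eq_sum_range_succ (fun i j => a i * a j)]
  match n with
  | 0 => simp [a_zero]
  | 1 => simp [Finset.sum_range_succ, a_zero, a_one]
  | (m+2) =>
    rw [Finset.sum_range_succ']
    simp only [a_zero, mul_zero, zero_mul, add_zero]
    rw [Finset.sum_range_succ]
    have h1 : m + 2 - (m + 1 + 1) = 0 := by omega
    rw [h1]
    simp only [a_zero, mul_zero, add_zero]
    have h2 : ∀ i, m + 2 - (i+1) = m + 1 - i := fun i => by omega
    rw [a_two_add]
    have : (if m + 2 = 1 then (1:ℝ) else 0) = 0 := by simp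
    rw [this]
    rw [Finset.sum_congr rfl (fun i _ => by rw [h2 i])]
    ring

lemma sum_a_le_one : ∀ N, ∑ n ∈ Finset.range N, a n ≤ 1 := by
  intro N
  induction N using Nat.strong_induction_on with
  | _ N ih =>
    match N with
    | 0 => simp
    | 1 => simp [a_zero]
    | (m+2) =>
      -- ∑_{n < m+2} a n = a 0 + a 1 + ∑_{k < m} a (k+2)
      have hsplit : ∑ n ∈ Finset.range (m+2), a n
          = 1/2 + ∑ k ∈ Finset.range m, a (k+2) := by
        rw [Finset.sum_range_succ', Finset.sum_range_succ']
        have h01 : a (0+1) = 1/2 := a_one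
        have h00 : a 0 = 0 := a_zero
        have : ∀ x, a (x + 1 + 1) = a (x + 2) := fun x => rfl
        simp only [this, h01, h00]
        ring
      rw [hsplit]
      -- bound the double sum
      have hD : ∑ k ∈ Finset.range m, a (k+2)
          ≤ (1/2) * (∑ n ∈ Finset.range (m+1), a n)^2 := by
        have : ∀ k, a (k+2) = (1/2) * ∑ i ∈ Finset.range (k+1), a (i+1) * a (k+1-i) :=
          a_two_add
        calc ∑ k ∈ Finset.range m, a (k+2)
            = (1/2) * ∑ k ∈ Finset.range m, ∑ i ∈ Finset.range (k+1), a (i+1) * a (k+1-i) := by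
              rw [Finset.mul_sum]; exact Finset.sum_congr rfl (fun k _ => this k)
          _ ≤ (1/2) * (∑ n ∈ Finset.range (m+1), a n)^2 := by
              have key : ∑ k ∈ Finset.range m, ∑ i ∈ Finset.range (k+1), a (i+1) * a (k+1-i)
                  ≤ (∑ n ∈ Finset.range (m+1), a n)^2 := by
                rw [sq, Finset.sum_mul_sum, ← Finset.sum_product']
                rw [Finset.sum_sigma']
                set S := (Finset.range m).sigma (fun k => Finset.range (k+1)) with hS
                set E : (_ : ℕ) × ℕ → ℕ × ℕ := fun p => (p.2+1, p.1+1-p.2) with hE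
                have hinj : ∀ p ∈ S, ∀ q ∈ S, E p = E q → p = q := by
                  rintro ⟨k, i⟩ hp ⟨k', i'⟩ hq heq
                  simp only [hE, Prod.mk.injEq] at heq
                  simp only [hS, Finset.mem_sigma, Finset.mem_range] at hp hq
                  obtain ⟨h1, h2⟩ := heq
                  have : i = i' := by omega
                  subst this
                  have : k = k' := by omega
                  simp [this]
                have himage : S.image E ⊆ (Finset.range (m+1)) ×ˢ (Finset.range (m+1)) := by
                  intro p hp
                  simp only [Finset.mem_image] at hp
                  obtain ⟨⟨k, i⟩, hki, rfl⟩ := hp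
                  simp only [hS, Finset.mem_sigma, Finset.mem_range] at hki
                  simp only [hE, Finset.mem_product, Finset.mem_range]
                  omega
                calc ∑ p ∈ S, a (p.2+1) * a (p.1+1-p.2)
                    = ∑ q ∈ S.image E, a q.1 * a q.2 := by
                      rw [Finset.sum_image hinj]
                  _ ≤ ∑ q ∈ (Finset.range (m+1)) ×ˢ (Finset.range (m+1)), a q.1 * a q.2 := by
                      apply Finset.sum_le_sum_of_subset_of_nonneg himage
                      intro q _ _
                      exact mul_nonneg (a_nonneg _) (a_nonneg _)
              linarith
      have hS1 : ∑ n ∈ Finset.range (m+1), a n ≤ 1 := ih _ (by omega)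
      have hS0 : 0 ≤ ∑ n ∈ Finset.range (m+1), a n :=
        Finset.sum_nonneg (fun i _ => a_nonneg i)
      nlinarith

lemma summable_a : Summable a :=
  summable_of_sum_range_le a_nonneg sum_a_le_one

lemma tsum_a_le_one : ∑' n, a n ≤ 1 :=
  summable_a.tsum_le_of_sum_range_le sum_a_le_one

lemma summable_a_mul_pow {r : ℝ} (hr0 : 0 ≤ r) (hr1 : r ≤ 1) :
    Summable (fun n => a n * r ^ n) := by
  apply Summable.of_nonneg_of_le (fun n => mul_nonneg (a_nonneg n) (pow_nonneg hr0 n))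
    (fun n => ?_) summable_a
  calc a n * r ^ n ≤ a n * 1 := by
        apply mul_le_mul_of_nonneg_left (pow_le_one₀ hr0 hr1) (a_nonneg n)
    _ = a n := mul_one _

lemma tsum_a_mul_pow_le_one {r : ℝ} (hr0 : 0 ≤ r) (hr1 : r ≤ 1) :
    ∑' n, a n * r ^ n ≤ 1 := by
  refine le_trans (Summable.tsum_le_tsum (fun n => ?_) (summable_a_mul_pow hr0 hr1) summable_a)
    tsum_a_le_one
  calc a n * r ^ n ≤ a n * 1 :=
        mul_le_mul_of_nonneg_left (pow_le_one₀ hr0 hr1) (a_nonneg n)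
    _ = a n := mul_one _

lemma tsum_a_mul_pow_nonneg {r : ℝ} (hr0 : 0 ≤ r) (hr1 : r ≤ 1) :
    0 ≤ ∑' n, a n * r ^ n :=
  tsum_nonneg (fun n => mul_nonneg (a_nonneg n) (pow_nonneg hr0 n))

lemma tsum_a_mul_pow_eq {r : ℝ} (hr0 : 0 ≤ r) (hr1 : r ≤ 1) :
    ∑' n, a n * r ^ n = 1 - Real.sqrt (1 - r) := by
  set G := ∑' n, a n * r ^ n with hG
  have hsum := summable_a_mul_pow hr0 hr1
  have hsumnorm : Summable (fun n => ‖a n * r ^ n‖) := by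
    simpa only [Real.norm_eq_abs] using hsum.abs
  have cauchy := tsum_mul_tsum_eq_tsum_sum_antidiagonal_of_summable_norm
    (f := fun n => a n * r ^ n) (g := fun n => a n * r ^ n) hsumnorm hsumnorm
  rw [← hG] at cauchy
  -- simplify inner sums
  have inner : ∀ n : ℕ, ∑ p ∈ Finset.HasAntidiagonal.antidiagonal n,
      (a p.1 * r ^ p.1) * (a p.2 * r ^ p.2)
      = 2 * (a n * r ^ n) - (if n = 1 then r else 0) := by
    intro n
    have : ∀ p ∈ Finset.HasAntidiagonal.antidiagonal n,
        (a p.1 * r ^ p.1) * (a p.2 * r ^ p.2) = (a p.1 * a p.2) * r ^ n := by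
      intro p hp
      rw [Finset.HasAntidiagonal.mem_antidiagonal] at hp
      rw [← hp, pow_add]; ring
    rw [Finset.sum_congr rfl this, ← Finset.sum_mul, a_antidiagonal]
    by_cases hn : n = 1 <;> simp [hn] <;> ring
  have cauchy2 : G * G = ∑' n, ∑ p ∈ Finset.HasAntidiagonal.antidiagonal n,
      (a p.1 * r ^ p.1) * (a p.2 * r ^ p.2) := cauchy
  rw [tsum_congr inner] at cauchy2
  have hsum2 : Summable (fun n => 2 * (a n * r ^ n)) := hsum.mul_left 2
  have hsumind : Summable (fun n : ℕ => if n = 1 then r else 0) :=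
    summable_of_ne_finset_zero (s := {1}) (by intro n hn; simp at hn; simp [hn])
  rw [Summable.tsum_sub hsum2 hsumind, tsum_mul_left, tsum_ite_eq 1 (fun _ => r), ← hG] at cauchy2
  -- cauchy : G * G = 2 * G - r
  have hGle : G ≤ 1 := tsum_a_mul_pow_le_one hr0 hr1
  have hkey : (1 - G)^2 = 1 - r := by ring_nf; ring_nf at cauchy2; linarith
  have : Real.sqrt (1 - r) = 1 - G := by
    rw [← hkey, Real.sqrt_sq (by linarith)]
  linarith

/-- spectral radius is at most the norm, without `NormOneClass`. -/
lemma sr_le_nnnorm {B : Type*} [NormedRing B] [NormedAlgebra ℂ B] [CompleteSpace B] (v : B) :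
    spectralRadius ℂ v ≤ (‖v‖₊ : ℝ≥0∞) := by
  refine (spectrum.spectralRadius_le_liminf_pow_nnnorm_pow_one_div ℂ v).trans ?_
  refine le_trans Filter.liminf_le_limsup (Filter.limsup_le_of_le (by isBoundedDefault) ?_)
  · filter_upwards [Filter.eventually_ge_atTop 1] with n hn
    have h1 : ‖v ^ n‖₊ ≤ ‖v‖₊ ^ n := nnnorm_pow_le' v hn
    calc (‖v ^ n‖₊ : ℝ≥0∞) ^ (1 / (n:ℝ))
        ≤ ((‖v‖₊ ^ n : ℝ≥0) : ℝ≥0∞) ^ (1 / (n:ℝ)) := by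
          exact ENNReal.rpow_le_rpow (by exact_mod_cast h1) (by positivity)
      _ = (‖v‖₊ : ℝ≥0∞) := by
          rw [ENNReal.coe_pow, ← ENNReal.rpow_natCast, ← ENNReal.rpow_mul,
            mul_one_div, div_self (show (n:ℝ) ≠ 0 by exact_mod_cast Nat.one_le_iff_ne_zero.mp hn), ENNReal.rpow_one]

lemma le_sr {B : Type*} [NormedRing B] [NormedAlgebra ℂ B] {v : B} {k : ℂ}
    (hk : k ∈ spectrum ℂ v) : (‖k‖₊ : ℝ≥0∞) ≤ spectralRadius ℂ v :=
  le_iSup₂ (f := fun k (_ : k ∈ spectrum ℂ v) => (‖k‖₊ : ℝ≥0∞)) k hk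

lemma key {B : Type*} [NormedCommRing B] [NormedAlgebra ℂ B] [CompleteSpace B]
    (x : B) (hx : spectralRadius ℂ x < 1) (hy1 : ‖x * x + 2 * x‖ ≤ 1) :
    ‖x‖ ≤ 1 - Real.sqrt (1 - ‖x * x + 2 * x‖) := by
  set y := x * x + 2 * x with hy
  have hy0 : (0:ℝ) ≤ ‖y‖ := norm_nonneg y
  set co : ℕ → ℂ := fun n => (((-1:ℝ)^n * a n : ℝ) : ℂ) with hco
  have hconorm : ∀ n, ‖co n‖ = a n := by
    intro n
    rw [hco]
    rw [Complex.norm_real, Real.norm_eq_abs, abs_mul, abs_pow, abs_neg, abs_one,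
      one_pow, one_mul, abs_of_nonneg (a_nonneg n)]
  have hterm : ∀ n, ‖co n • y ^ n‖ ≤ a n * ‖y‖ ^ n := by
    intro n
    rw [norm_smul, hconorm]
    match n with
    | 0 => simp [a_zero]
    | (m+1) =>
      exact mul_le_mul_of_nonneg_left (norm_pow_le' y (Nat.succ_pos m)) (a_nonneg _)
  have hsumbound : Summable (fun n => a n * ‖y‖ ^ n) := summable_a_mul_pow hy0 hy1
  have hsumnorm : Summable (fun n => ‖co n • y ^ n‖) :=
    Summable.of_nonneg_of_le (fun n => norm_nonneg _) hterm hsumbound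
  have hsum : Summable (fun n => co n • y ^ n) := hsumnorm.of_norm
  set T := ∑' n, co n • y ^ n with hT
  have hTnorm : ‖T‖ ≤ 1 - Real.sqrt (1 - ‖y‖) := by
    calc ‖T‖ ≤ ∑' n, ‖co n • y ^ n‖ := norm_tsum_le_tsum_norm hsumnorm
      _ ≤ ∑' n, a n * ‖y‖ ^ n := Summable.tsum_le_tsum hterm hsumnorm hsumbound
      _ = 1 - Real.sqrt (1 - ‖y‖) := tsum_a_mul_pow_eq hy0 hy1
  -- Cauchy product : T * T = 2 * T + y
  have hTT : T * T = 2 * T + y := by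
    have cauchy := tsum_mul_tsum_eq_tsum_sum_antidiagonal_of_summable_norm
      (f := fun n => co n • y ^ n) (g := fun n => co n • y ^ n) hsumnorm hsumnorm
    have inner : ∀ n : ℕ, ∑ kl ∈ Finset.HasAntidiagonal.antidiagonal n,
        (co kl.1 • y ^ kl.1) * (co kl.2 • y ^ kl.2)
        = (2 * co n) • y ^ n - (if n = 1 then (-1 : ℂ) • y else 0) := by
      intro n
      have e1 : ∀ p ∈ Finset.HasAntidiagonal.antidiagonal n, (co p.1 • y ^ p.1) * (co p.2 • y ^ p.2)
          = (co p.1 * co p.2) • y ^ n := by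
        intro p hp
        rw [Finset.HasAntidiagonal.mem_antidiagonal] at hp
        rw [smul_mul_smul_comm, ← pow_add, hp]
      rw [Finset.sum_congr rfl e1, ← Finset.sum_smul]
      have e2 : ∑ p ∈ Finset.HasAntidiagonal.antidiagonal n, co p.1 * co p.2
          = 2 * co n - (if n = 1 then (-1 : ℂ) else 0) := by
        have e3 : ∀ p ∈ Finset.HasAntidiagonal.antidiagonal n, co p.1 * co p.2
            = (-1 : ℂ)^n * ((a p.1 * a p.2 : ℝ) : ℂ) := by
          intro p hp
          rw [Finset.HasAntidiagonal.mem_antidiagonal] at hp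
          rw [hco]
          push_cast
          rw [← hp, pow_add]
          ring
        rw [Finset.sum_congr rfl e3, ← Finset.mul_sum]
        have : ((∑ p ∈ Finset.HasAntidiagonal.antidiagonal n, ((a p.1 * a p.2 : ℝ) : ℂ)))
            = (((2 * a n - (if n = 1 then 1 else 0) : ℝ)) : ℂ) := by
          rw [← a_antidiagonal n]
          push_cast
          rfl
        rw [this]
        by_cases hn : n = 1
        · subst hn
          simp [hco, a_one]
        · simp only [hn, if_false, if_neg hn]
          rw [hco]
          push_cast
          ring
      rw [e2]
      by_cases hn : n = 1
      · subst hn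
        rw [pow_one]
        have h9 : (if (1:ℕ) = 1 then (-1:ℂ) else 0) = -1 := if_pos rfl
        have h10 : (if (1:ℕ) = 1 then (-1:ℂ) • y else 0) = (-1:ℂ) • y := if_pos rfl
        rw [h9, h10, sub_smul]
      · simp [hn]
    have cauchy2 : T * T
        = ∑' n, ((2 * co n) • y ^ n - (if n = 1 then (-1 : ℂ) • y else 0)) := by
      rw [hT, cauchy]
      exact tsum_congr inner
    have hsum2 : Summable (fun n => (2 * co n) • y ^ n) := by
      have he : (fun n => (2 * co n) • y ^ n) = fun n => (2:ℂ) • (co n • y ^ n) := by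
        funext n; rw [mul_smul]
      rw [he]; exact hsum.const_smul _
    have hsumind : Summable (fun n : ℕ => if n = 1 then (-1 : ℂ) • y else 0) :=
      summable_of_ne_finset_zero (s := {1})
        (by intro n hn; simp only [Finset.mem_singleton] at hn; simp [hn])
    rw [Summable.tsum_sub hsum2 hsumind, tsum_ite_eq 1 (fun _ => (-1 : ℂ) • y)] at cauchy2
    have htwoT : ∑' n, (2 * co n) • y ^ n = (2:ℂ) • T := by
      calc ∑' n, (2 * co n) • y ^ n = ∑' n, (2:ℂ) • (co n • y ^ n) :=
            tsum_congr (fun n => by rw [mul_smul])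
        _ = (2:ℂ) • T := (hsum.hasSum.const_smul (2:ℂ)).tsum_eq
    rw [htwoT] at cauchy2
    rw [cauchy2, two_smul, neg_smul, one_smul, two_mul]
    ring
  have hsq : (1 - T) * (1 - T) = 1 + y := by
    have : (1 - T) * (1 - T) = 1 - 2 * T + T * T := by ring
    rw [this, hTT]
    ring
  set u := (1 - T) + 1 + x with hu
  have hunit : IsUnit u := by
    by_contra hnu
    obtain ⟨φ, hφ⟩ := WeakDual.CharacterSpace.exists_apply_eq_zero hnu
    have hφy : ‖φ y‖ ≤ 1 := by
      have h1 : (‖φ y‖₊ : ℝ≥0∞) ≤ (‖y‖₊ : ℝ≥0∞) :=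
        (le_sr (WeakDual.CharacterSpace.apply_mem_spectrum φ y)).trans (sr_le_nnnorm y)
      have h2 : ‖φ y‖ ≤ ‖y‖ := by exact_mod_cast h1
      exact h2.trans hy1
    have hφx : ‖φ x‖ < 1 := by
      have h1 : (‖φ x‖₊ : ℝ≥0∞) < 1 :=
        lt_of_le_of_lt (le_sr (WeakDual.CharacterSpace.apply_mem_spectrum φ x)) hx
      have h2 : ‖φ x‖₊ < 1 := by exact_mod_cast h1
      exact h2
    -- φ T
    have hφT : φ T = ∑' n, co n * (φ y) ^ n := by
      have h1 : φ T = ∑' n, φ (co n • y ^ n) := by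
        exact (WeakDual.CharacterSpace.toCLM φ).map_tsum hsum
      rw [h1]
      refine tsum_congr (fun n => ?_)
      rw [map_smul, map_pow, smul_eq_mul]
    have hφTnorm : ‖φ T‖ ≤ 1 := by
      have hb : ∀ n, ‖co n * (φ y) ^ n‖ ≤ a n := by
        intro n
        rw [norm_mul, hconorm, norm_pow]
        calc a n * ‖φ y‖ ^ n ≤ a n * 1 :=
              mul_le_mul_of_nonneg_left (pow_le_one₀ (norm_nonneg _) hφy) (a_nonneg n)
          _ = a n := mul_one _
      have hsumφ : Summable (fun n => co n * (φ y) ^ n) := by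
        apply Summable.of_norm
        exact Summable.of_nonneg_of_le (fun n => norm_nonneg _) hb summable_a
      calc ‖φ T‖ = ‖∑' n, co n * (φ y) ^ n‖ := by rw [hφT]
        _ ≤ ∑' n, ‖co n * (φ y) ^ n‖ := norm_tsum_le_tsum_norm hsumφ.norm
        _ ≤ ∑' n, a n := Summable.tsum_le_tsum hb hsumφ.norm summable_a
        _ ≤ 1 := tsum_a_le_one
    -- contradiction
    have hφu : φ u = 2 - φ T + φ x := by
      rw [hu]
      rw [map_add, map_add, map_sub, map_one]
      ring
    rw [hφ] at hφu
    have : φ T = 2 + φ x := by linear_combination hφu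
    have h2 : (2 : ℝ) - ‖φ x‖ ≤ ‖φ T‖ := by
      rw [this]
      have := norm_sub_norm_le (2 + φ x) (φ x)
      simp only [add_sub_cancel_right] at this
      calc (2:ℝ) - ‖φ x‖ = ‖(2:ℂ)‖ - ‖φ x‖ := by norm_num
        _ ≤ ‖2 + φ x‖ := by
            have := norm_add_le (2 + φ x) (-φ x)
            simp only [add_neg_cancel_right, norm_neg] at this
            linarith
    linarith
  -- conclude
  have hzero : ((1 - T) - (1 + x)) * u = 0 := by
    have h2 : (1 + x) * (1 + x) = 1 + y := by rw [hy]; ring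
    calc ((1 - T) - (1 + x)) * u = (1 - T) * (1 - T) - (1 + x) * (1 + x) := by rw [hu]; ring
      _ = (1 + y) - (1 + y) := by rw [hsq, h2]
      _ = 0 := sub_self _
  have hfin : (1 - T) - (1 + x) = 0 := (IsUnit.mul_left_eq_zero hunit).mp hzero
  have hxT : x = -T := by linear_combination -hfin
  rw [hxT, norm_neg]
  exact hTnorm

end CosAux

open CosAux in
theorem half_norm_estimate {A : Type*} [NormedRing A] [NormedAlgebra ℂ A]
    [CompleteSpace A] (C : ℝ → A) (hC : IsCosineFunction C) (η : ℝ)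
    (hη : 0 < η)
    (h : ∀ t : ℝ, |t| ≤ η →
      ‖C t - 1‖ ≤ 2 ∧ spectralRadius ℂ (C (t / 2) - 1) < 1) :
    ∀ t : ℝ, |t| ≤ η →
      ‖C (t / 2) - 1‖ ≤ 1 - Real.sqrt (1 - ‖C t - 1‖ / 2) := by
  intro t ht
  obtain ⟨h2, hρ⟩ := h t ht
  set x := C (t / 2) - 1 with hx
  have hcos := hC.2 (t/2) (t/2)
  rw [show t/2 + t/2 = t by ring, show t/2 - t/2 = 0 by ring, hC.1] at hcos
  have hCt2 : C (t/2) = 1 + x := by rw [hx]; abel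
  rw [hCt2] at hcos
  have e1 : C t = 2 * ((1:A) + x) * (1 + x) - 1 := eq_sub_of_add_eq hcos
  have hy2 : C t - 1 = (2:ℂ) • (x * x + 2 * x) := by
    rw [e1, two_smul]
    noncomm_ring
  have hnorm2 : ‖C t - 1‖ = 2 * ‖x * x + 2 * x‖ := by
    rw [hy2, norm_smul]
    norm_num
  set B := Algebra.elemental ℂ x with hB
  letI : NormedCommRing B := { (inferInstance : NormedRing B) with mul_comm := mul_comm }
  set x' : B := ⟨x, Algebra.elemental.self_mem ℂ x⟩ with hx'
  have hnormcoe : ∀ b : B, ‖b‖ = ‖(b : A)‖ := fun b => rfl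
  have hsrx : spectralRadius ℂ x' < 1 := by
    have h1 := spectrum.spectralRadius_le_liminf_pow_nnnorm_pow_one_div ℂ x'
    have heq : (fun n : ℕ => (‖x' ^ n‖₊ : ℝ≥0∞) ^ (1/(n:ℝ)))
        = (fun n : ℕ => (‖x ^ n‖₊ : ℝ≥0∞) ^ (1/(n:ℝ))) := by
      funext n
      have hc : ‖x' ^ n‖₊ = ‖x ^ n‖₊ := by
        have hcc : ((x' ^ n : B) : A) = x ^ n := by push_cast; rfl
        rw [← hcc]
        rfl
      rw [hc]
    rw [heq] at h1
    refine lt_of_le_of_lt (h1.trans (le_trans Filter.liminf_le_limsup ?_)) hρ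
    exact spectrum.limsup_pow_nnnorm_pow_one_div_le_spectralRadius x
  have hcoey : ((x' * x' + 2 * x' : B) : A) = x * x + 2 * x := by
    push_cast
    rfl
  have hyB : ‖x' * x' + 2 * x'‖ ≤ 1 := by
    rw [hnormcoe, hcoey]
    linarith [hnorm2 ▸ h2]
  have hkey := key x' hsrx hyB
  have hxnorm : ‖x‖ = ‖x'‖ := rfl
  rw [hxnorm]
  refine hkey.trans (le_of_eq ?_)
  rw [hnormcoe, hcoey]
  rw [hnorm2]
  ring_nf
end

section
/- Let A be a complex unital Banach algebra, let (C(t))_{t∈ℝ} be a cosine function in A, and suppose η > 0 is such that for every t with |t| ≤ η one has ‖C(t) − 1_A‖ ≤ 2 and ρ(C(t/2) − 1_A) < 1, where ρ denotes the spectral radius. Define the real sequence (u_n) by u_0 = 2 and u_{n+1} = 1 − √(1 − u_n/2). Then for every n ≥ 1, sup_{|t| ≤ 2^{−n} η} ‖C(t) − 1_A‖ ≤ u_n. -/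
open Filter Topology
open scoped ENNReal NNReal

/-- Coefficients of the power series of `1 - √(1-x)`. -/
noncomputable def sqCoef : ℕ → ℝ
  | 0 => 0
  | 1 => 1 / 2
  | k + 2 => (1 / 2) * ∑ i ∈ (Finset.range (k + 1)).attach,
      sqCoef (i.1 + 1) * sqCoef (k + 1 - i.1)
  decreasing_by
  · have := i.2; rw [Finset.mem_range] at this; omega
  · omega

lemma sqCoef_zero : sqCoef 0 = 0 := by rw [sqCoef]
lemma sqCoef_one : sqCoef 1 = 1 / 2 := by rw [sqCoef]

lemma sqCoef_rec (k : ℕ) :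
    sqCoef (k + 2)
      = (1 / 2) * ∑ i ∈ Finset.range (k + 1), sqCoef (i + 1) * sqCoef (k + 1 - i) := by
  rw [sqCoef, ← Finset.sum_attach (Finset.range (k + 1))
    (fun i => sqCoef (i + 1) * sqCoef (k + 1 - i))]

lemma sqCoef_nonneg : ∀ k, 0 ≤ sqCoef k := by
  intro k
  induction k using Nat.strong_induction_on with
  | _ k ih =>
    match k with
    | 0 => rw [sqCoef_zero]
    | 1 => rw [sqCoef_one]; norm_num
    | (k + 2) =>
      rw [sqCoef_rec]
      apply mul_nonneg (by norm_num)
      apply Finset.sum_nonneg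
      intro i hi
      rw [Finset.mem_range] at hi
      exact mul_nonneg (ih _ (by omega)) (ih _ (by omega))

lemma sqCoef_antidiagonal : ∀ k : ℕ, k ≠ 1 →
    ∑ p ∈ Finset.HasAntidiagonal.antidiagonal k, sqCoef p.1 * sqCoef p.2 = 2 * sqCoef k
  | 0, _ => by simp [sqCoef_zero]
  | 1, h => absurd rfl h
  | (m + 2), _ => by
    rw [Finset.Nat.sum_antidiagonal_eq_sum_range_succ_mk]
    rw [Finset.sum_range_succ, Finset.sum_range_succ']
    have h0 : m + 2 - (m + 2) = 0 := by omega
    have hcongr : ∀ i ∈ Finset.range (m + 1),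
        sqCoef (i + 1) * sqCoef (m + 2 - (i + 1)) = sqCoef (i + 1) * sqCoef (m + 1 - i) := by
      intro i hi
      congr 2
      omega
    rw [Finset.sum_congr rfl hcongr, h0, sqCoef_zero, sqCoef_rec]
    ring
lemma sqCoef_partial_sum {c : ℝ} (h0 : 0 ≤ c) (h1 : c ≤ 1) (N : ℕ) :
    ∑ k ∈ Finset.range N, sqCoef k * c ^ k ≤ 1 - Real.sqrt (1 - c) := by
  have hs0 : 0 ≤ Real.sqrt (1 - c) := Real.sqrt_nonneg _
  have hs1 : Real.sqrt (1 - c) ≤ 1 := by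
    calc Real.sqrt (1 - c) ≤ Real.sqrt 1 := Real.sqrt_le_sqrt (by linarith)
      _ = 1 := Real.sqrt_one
  have hsq : Real.sqrt (1 - c) ^ 2 = 1 - c := Real.sq_sqrt (by linarith)
  induction N with
  | zero => simp; linarith
  | succ N ih =>
    have hP0 : 0 ≤ ∑ k ∈ Finset.range N, sqCoef k * c ^ k :=
      Finset.sum_nonneg fun k _ => mul_nonneg (sqCoef_nonneg k) (pow_nonneg h0 k)
    have key : 2 * ∑ k ∈ Finset.range (N + 1), sqCoef k * c ^ k
        ≤ c + (∑ k ∈ Finset.range N, sqCoef k * c ^ k) ^ 2 := by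
      set F : ℕ × ℕ → ℝ := fun p => sqCoef p.1 * sqCoef p.2 * c ^ (p.1 + p.2) with hF
      have hFnonneg : ∀ p, 0 ≤ F p := fun p =>
        mul_nonneg (mul_nonneg (sqCoef_nonneg _) (sqCoef_nonneg _)) (pow_nonneg h0 _)
      have hterm : ∀ k, 2 * (sqCoef k * c ^ k)
          = (if k = 1 then c else 0) + ∑ p ∈ Finset.HasAntidiagonal.antidiagonal k, F p := by
        intro k
        have h2 : ∑ p ∈ Finset.HasAntidiagonal.antidiagonal k, F p
            = (∑ p ∈ Finset.HasAntidiagonal.antidiagonal k, sqCoef p.1 * sqCoef p.2) * c ^ k := by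
          rw [Finset.sum_mul]
          apply Finset.sum_congr rfl
          intro p hp
          rw [Finset.HasAntidiagonal.mem_antidiagonal] at hp
          rw [hF]; simp only []; rw [hp]
        by_cases hk : k = 1
        · subst hk
          rw [h2, if_pos rfl]
          have : ∑ p ∈ Finset.HasAntidiagonal.antidiagonal 1, sqCoef p.1 * sqCoef p.2 = 0 := by
            rw [Finset.Nat.sum_antidiagonal_eq_sum_range_succ_mk]
            simp [Finset.sum_range_succ, sqCoef_zero]
          rw [this, sqCoef_one]; ring
        · rw [h2, sqCoef_antidiagonal k hk, if_neg hk]; ring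
      have hdisj : (↑(Finset.range (N + 1)) : Set ℕ).PairwiseDisjoint
          (fun k => Finset.HasAntidiagonal.antidiagonal k) := by
        intro i _ j _ hij
        refine Finset.disjoint_left.mpr fun p hp hp' => ?_
        rw [Finset.HasAntidiagonal.mem_antidiagonal] at hp hp'
        exact hij (hp ▸ hp')
      calc 2 * ∑ k ∈ Finset.range (N + 1), sqCoef k * c ^ k
          = ∑ k ∈ Finset.range (N + 1), 2 * (sqCoef k * c ^ k) := by rw [Finset.mul_sum]
        _ = ∑ k ∈ Finset.range (N + 1),
            ((if k = 1 then c else 0) + ∑ p ∈ Finset.HasAntidiagonal.antidiagonal k, F p) :=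
            Finset.sum_congr rfl fun k _ => hterm k
        _ = (∑ k ∈ Finset.range (N + 1), if k = 1 then c else 0)
            + ∑ k ∈ Finset.range (N + 1), ∑ p ∈ Finset.HasAntidiagonal.antidiagonal k, F p :=
            Finset.sum_add_distrib
        _ ≤ c + (∑ k ∈ Finset.range N, sqCoef k * c ^ k) ^ 2 := by
            apply add_le_add
            · rw [Finset.sum_ite_eq' (Finset.range (N + 1)) 1 (fun _ => c)]
              split <;> simp [h0]
            · rw [← Finset.sum_biUnion hdisj]
              set S := (Finset.range (N + 1)).biUnion (fun k => Finset.HasAntidiagonal.antidiagonal k) with hS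
              have hmemS : ∀ p : ℕ × ℕ, p ∈ S ↔ p.1 + p.2 ≤ N := by
                intro p
                simp only [hS, Finset.mem_biUnion, Finset.HasAntidiagonal.mem_antidiagonal,
                  Finset.mem_range]
                constructor
                · rintro ⟨k, hk, rfl⟩; omega
                · intro hp; exact ⟨p.1 + p.2, by omega, rfl⟩
              have hsq2 : (∑ k ∈ Finset.range N, sqCoef k * c ^ k) ^ 2
                  = ∑ p ∈ Finset.range N ×ˢ Finset.range N, F p := by
                rw [sq, Finset.sum_mul_sum, Finset.sum_product]
                apply Finset.sum_congr rfl; intro i _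
                apply Finset.sum_congr rfl; intro j _
                rw [hF]; simp only []; rw [pow_add]; ring
              rw [hsq2]
              calc ∑ p ∈ S, F p
                  ≤ ∑ p ∈ S ∪ Finset.range N ×ˢ Finset.range N, F p :=
                    Finset.sum_le_sum_of_subset_of_nonneg Finset.subset_union_left
                      (fun p _ _ => hFnonneg p)
                _ = ∑ p ∈ Finset.range N ×ˢ Finset.range N, F p := by
                    refine (Finset.sum_subset Finset.subset_union_right ?_).symm
                    intro p hp hnp
                    have hpS : p ∈ S := by
                      rcases Finset.mem_union.mp hp with h | h
                      · exact h
                      · exact absurd h hnp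
                    have h1' : p.1 + p.2 ≤ N := (hmemS p).mp hpS
                    have h2' : ¬(p.1 < N ∧ p.2 < N) := by
                      simpa [Finset.mem_product, Finset.mem_range] using hnp
                    have h3' : p.1 = 0 ∨ p.2 = 0 := by omega
                    rcases h3' with h | h <;>
                      · rw [hF]; simp only []; rw [h, sqCoef_zero]; ring
    nlinarith [ih, hsq, hP0]
section SpectralLemmas

variable {A : Type*} [NormedRing A] [NormedAlgebra ℂ A] [CompleteSpace A]

lemma nnnorm_natCast_le' (m : ℕ) : ‖(m : A)‖₊ ≤ m * ‖(1 : A)‖₊ := by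
  induction m with
  | zero => simp
  | succ m ih =>
    push_cast
    calc ‖(m : A) + 1‖₊ ≤ ‖(m : A)‖₊ + ‖(1 : A)‖₊ := nnnorm_add_le _ _
      _ ≤ m * ‖(1 : A)‖₊ + ‖(1 : A)‖₊ := add_le_add_left ih _
      _ = (m + 1) * ‖(1 : A)‖₊ := by ring

lemma spectralRadius_lt_top' (a : A) : spectralRadius ℂ a < ⊤ := by
  have h := spectrum.spectralRadius_le_pow_nnnorm_pow_one_div ℂ a 0
  have h1 : (1 / ((0 : ℕ) + 1) : ℝ) = 1 := by norm_num
  rw [h1, ENNReal.rpow_one, ENNReal.rpow_one, pow_one] at h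
  exact h.trans_lt (by exact ENNReal.mul_lt_top ENNReal.coe_lt_top ENNReal.coe_lt_top)

lemma exists_pow_nnnorm_le' {a : A} {r : ℝ≥0} (hr : spectralRadius ℂ a < r) :
    ∃ M : ℝ≥0, 1 ≤ M ∧ ∀ n : ℕ, ‖a ^ n‖₊ ≤ M * r ^ n := by
  have hr0 : r ≠ 0 := by rintro rfl; simp at hr
  have htend := spectrum.pow_nnnorm_pow_one_div_tendsto_nhds_spectralRadius a
  have hev : ∀ᶠ n : ℕ in atTop, (‖a ^ n‖₊ : ℝ≥0∞) ^ (1 / n : ℝ) < r :=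
    htend.eventually_lt_const hr
  obtain ⟨N, hN⟩ := eventually_atTop.mp hev
  refine ⟨(Finset.range (N + 1)).sup (fun k => ‖a ^ k‖₊ / r ^ k) ⊔ 1, le_sup_right, fun n => ?_⟩
  rcases lt_or_ge n (N + 1) with hn | hn
  · have h1 : ‖a ^ n‖₊ / r ^ n ≤ (Finset.range (N + 1)).sup (fun k => ‖a ^ k‖₊ / r ^ k) ⊔ 1 :=
      le_sup_of_le_left (Finset.le_sup (f := fun k => ‖a ^ k‖₊ / r ^ k) (Finset.mem_range.mpr hn))
    calc ‖a ^ n‖₊ = ‖a ^ n‖₊ / r ^ n * r ^ n := by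
          rw [div_mul_cancel₀ _ (pow_ne_zero _ hr0)]
      _ ≤ _ := mul_le_mul_left h1 _
  · have h2 := hN n (by omega)
    have hn0 : (n : ℝ) ≠ 0 := Nat.cast_ne_zero.mpr (by omega)
    have h3 : (‖a ^ n‖₊ : ℝ≥0∞) ≤ (r : ℝ≥0∞) ^ n := by
      calc (‖a ^ n‖₊ : ℝ≥0∞) = ((‖a ^ n‖₊ : ℝ≥0∞) ^ (1 / n : ℝ)) ^ (n : ℝ) := by
            rw [← ENNReal.rpow_mul, one_div, inv_mul_cancel₀ hn0, ENNReal.rpow_one]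
        _ ≤ (r : ℝ≥0∞) ^ (n : ℝ) := ENNReal.rpow_le_rpow h2.le (Nat.cast_nonneg n)
        _ = (r : ℝ≥0∞) ^ n := ENNReal.rpow_natCast _ n
    rw [← ENNReal.coe_pow, ENNReal.coe_le_coe] at h3
    exact h3.trans (le_mul_of_one_le_left zero_le le_sup_right)

lemma spectralRadius_add_le_of_commute' {a b : A} (hab : Commute a b) :
    spectralRadius ℂ (a + b) ≤ spectralRadius ℂ a + spectralRadius ℂ b := by
  have hfa := spectralRadius_lt_top' a
  have hfb := spectralRadius_lt_top' b
  have main : ∀ r s : ℝ≥0, spectralRadius ℂ a < r → spectralRadius ℂ b < s →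
      spectralRadius ℂ (a + b) ≤ ((r + s : ℝ≥0) : ℝ≥0∞) := by
    intro r s hr hs
    obtain ⟨Ma, hMa1, hMa⟩ := exists_pow_nnnorm_le' hr
    obtain ⟨Mb, hMb1, hMb⟩ := exists_pow_nnnorm_le' hs
    set K : ℝ≥0 := ‖(1 : A)‖₊ * (Ma * Mb) + 1 with hK
    have hKpow : ∀ n : ℕ, ‖(a + b) ^ n‖₊ ≤ K * (r + s) ^ n := by
      intro n
      calc ‖(a + b) ^ n‖₊
          = ‖∑ m ∈ Finset.range (n + 1), a ^ m * b ^ (n - m) * (n.choose m : A)‖₊ := by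
            rw [hab.add_pow]
        _ ≤ ∑ m ∈ Finset.range (n + 1), ‖a ^ m * b ^ (n - m) * (n.choose m : A)‖₊ :=
            nnnorm_sum_le _ _
        _ ≤ ∑ m ∈ Finset.range (n + 1),
            Ma * r ^ m * (Mb * s ^ (n - m)) * ((n.choose m : ℝ≥0) * ‖(1 : A)‖₊) := by
            refine Finset.sum_le_sum fun m _ => ?_
            refine (nnnorm_mul_le _ _).trans ?_
            exact mul_le_mul' ((nnnorm_mul_le _ _).trans
              (mul_le_mul' (hMa m) (hMb (n - m)))) (nnnorm_natCast_le' _)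
        _ = ‖(1 : A)‖₊ * (Ma * Mb)
            * ∑ m ∈ Finset.range (n + 1), r ^ m * s ^ (n - m) * (n.choose m : ℝ≥0) := by
            rw [Finset.mul_sum]; apply Finset.sum_congr rfl; intros; ring
        _ = ‖(1 : A)‖₊ * (Ma * Mb) * (r + s) ^ n := by rw [← add_pow]
        _ ≤ K * (r + s) ^ n := mul_le_mul_left (by rw [hK]; exact le_self_add) _
    refine (spectrum.spectralRadius_le_liminf_pow_nnnorm_pow_one_div ℂ (a + b)).trans ?_
    refine ENNReal.le_of_forall_lt_one_mul_le fun x hx => ?_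
    rcases eq_or_ne x 0 with rfl | hx0
    · simp
    have hx_top : x ≠ ∞ := (hx.trans ENNReal.one_lt_top).ne
    have hy : 1 < x⁻¹ := ENNReal.one_lt_inv.mpr hx
    have hev2 := ENNReal.eventually_pow_one_div_le
      (ENNReal.coe_ne_top : (K : ℝ≥0∞) ≠ ∞) hy
    have hliminf_le : (atTop.liminf fun n : ℕ => (‖(a + b) ^ n‖₊ : ℝ≥0∞) ^ (1 / n : ℝ))
        ≤ x⁻¹ * ((r + s : ℝ≥0) : ℝ≥0∞) := by
      apply Filter.liminf_le_of_frequently_le'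
      apply Filter.Eventually.frequently
      filter_upwards [hev2, Filter.eventually_ge_atTop 1] with n hn hn1
      have hn0 : (n : ℝ) ≠ 0 := Nat.cast_ne_zero.mpr (by omega)
      calc (‖(a + b) ^ n‖₊ : ℝ≥0∞) ^ (1 / n : ℝ)
          ≤ ((K * (r + s) ^ n : ℝ≥0) : ℝ≥0∞) ^ (1 / n : ℝ) :=
            ENNReal.rpow_le_rpow (by exact_mod_cast hKpow n) (by positivity)
        _ = (K : ℝ≥0∞) ^ (1 / n : ℝ) * (((r + s : ℝ≥0) : ℝ≥0∞) ^ n) ^ (1 / n : ℝ) := by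
            rw [ENNReal.coe_mul, ENNReal.coe_pow,
              ENNReal.mul_rpow_of_nonneg _ _ (by positivity)]
        _ = (K : ℝ≥0∞) ^ (1 / n : ℝ) * ((r + s : ℝ≥0) : ℝ≥0∞) := by
            congr 1
            rw [← ENNReal.rpow_natCast _ n, ← ENNReal.rpow_mul, mul_one_div,
              div_self hn0, ENNReal.rpow_one]
        _ ≤ x⁻¹ * ((r + s : ℝ≥0) : ℝ≥0∞) := mul_le_mul_left hn _
    calc x * (atTop.liminf fun n : ℕ => (‖(a + b) ^ n‖₊ : ℝ≥0∞) ^ (1 / n : ℝ))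
        ≤ x * (x⁻¹ * ((r + s : ℝ≥0) : ℝ≥0∞)) := mul_le_mul_right hliminf_le x
      _ = (x * x⁻¹) * ((r + s : ℝ≥0) : ℝ≥0∞) := by rw [mul_assoc]
      _ = ((r + s : ℝ≥0) : ℝ≥0∞) := by rw [ENNReal.mul_inv_cancel hx0 hx_top, one_mul]
  apply ENNReal.le_of_forall_pos_le_add
  intro ε hε _
  have h2 : (0 : ℝ≥0) < ε / 2 := by positivity
  have ha' : spectralRadius ℂ a < ((spectralRadius ℂ a).toNNReal + ε / 2 : ℝ≥0) := by
    conv_lhs => rw [← ENNReal.coe_toNNReal hfa.ne]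
    exact_mod_cast lt_add_of_pos_right _ h2
  have hb' : spectralRadius ℂ b < ((spectralRadius ℂ b).toNNReal + ε / 2 : ℝ≥0) := by
    conv_lhs => rw [← ENNReal.coe_toNNReal hfb.ne]
    exact_mod_cast lt_add_of_pos_right _ h2
  refine (main _ _ ha' hb').trans ?_
  have hsum : (((spectralRadius ℂ a).toNNReal + ε / 2 + ((spectralRadius ℂ b).toNNReal + ε / 2)
      : ℝ≥0) : ℝ≥0∞)
      = (spectralRadius ℂ a + spectralRadius ℂ b) + ε := by
    simp only [ENNReal.coe_add]
    rw [ENNReal.coe_toNNReal hfa.ne, ENNReal.coe_toNNReal hfb.ne]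
    have : ((ε / 2 : ℝ≥0) : ℝ≥0∞) + ((ε / 2 : ℝ≥0) : ℝ≥0∞) = (ε : ℝ≥0∞) := by
      rw [← ENNReal.coe_add, add_halves]
    calc spectralRadius ℂ a + ↑(ε / 2) + (spectralRadius ℂ b + ↑(ε / 2))
        = (spectralRadius ℂ a + spectralRadius ℂ b) + (↑(ε / 2) + ↑(ε / 2)) := by ring
      _ = _ := by rw [this]
  exact le_of_eq hsum

lemma spectralRadius_neg_eq' (a : A) : spectralRadius ℂ (-a) = spectralRadius ℂ a := by
  have h : ∀ x : A, spectralRadius ℂ (-x) ≤ spectralRadius ℂ x := by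
    intro x
    refine iSup₂_le fun k hk => ?_
    rw [← spectrum.neg_eq, Set.mem_neg] at hk
    calc (‖k‖₊ : ℝ≥0∞) = ‖-k‖₊ := by rw [nnnorm_neg]
      _ ≤ spectralRadius ℂ x := le_iSup₂ (f := fun k (_ : k ∈ spectrum ℂ x) => (‖k‖₊ : ℝ≥0∞)) (-k) hk
  refine le_antisymm (h a) ?_
  conv_lhs => rw [← neg_neg a]
  exact h (-a)

lemma spectralRadius_le_one' {g : A} (hg : ‖g‖ ≤ 1) : spectralRadius ℂ g ≤ 1 := by
  refine (spectrum.spectralRadius_le_liminf_pow_nnnorm_pow_one_div ℂ g).trans ?_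
  apply Filter.liminf_le_of_frequently_le'
  apply Filter.Eventually.frequently
  filter_upwards [Filter.eventually_ge_atTop 1] with n hn
  have h1 : ‖g ^ n‖₊ ≤ 1 := by
    rw [← NNReal.coe_le_coe]
    push_cast
    calc ‖g ^ n‖ ≤ ‖g‖ ^ n := norm_pow_le' g (by omega)
      _ ≤ 1 := pow_le_one₀ (norm_nonneg g) hg
  calc (‖g ^ n‖₊ : ℝ≥0∞) ^ (1 / n : ℝ) ≤ (1 : ℝ≥0∞) ^ (1 / n : ℝ) :=
        ENNReal.rpow_le_rpow (by exact_mod_cast h1) (by positivity)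
    _ = 1 := ENNReal.one_rpow _

end SpectralLemmas
lemma key_step {A : Type*} [NormedRing A] [NormedAlgebra ℂ A] [CompleteSpace A]
    (a c : A) (heq : c + 1 = 2 * a * a) {r : ℝ} (hr0 : 0 ≤ r) (hr1 : r ≤ 1)
    (hc : ‖c - 1‖ ≤ 2 * r) (hrad : spectralRadius ℂ (a - 1) < 1) :
    ‖a - 1‖ ≤ 1 - Real.sqrt (1 - r) := by
  have hs0 : 0 ≤ Real.sqrt (1 - r) := Real.sqrt_nonneg _
  have hs1 : Real.sqrt (1 - r) ≤ 1 := by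
    calc Real.sqrt (1 - r) ≤ Real.sqrt 1 := Real.sqrt_le_sqrt (by linarith)
      _ = 1 := Real.sqrt_one
  set v : A := (-(2⁻¹) : ℂ) • (c - 1) with hv
  have hv_norm : ‖v‖ ≤ r := by
    rw [hv, norm_smul]
    have h2 : ‖(-(2⁻¹) : ℂ)‖ = 2⁻¹ := by
      rw [norm_neg, norm_inv]
      norm_num
    rw [h2]
    linarith
  have hvr : ∀ k : ℕ, ‖v‖ ^ k ≤ r ^ k := fun k => pow_le_pow_left₀ (norm_nonneg v) hv_norm k
  -- identity a * a = 1 - v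
  have hsq : a * a = 1 - v := by
    have e1 : ((2 : ℂ)) • (a * a) = 2 * a * a := by
      rw [Algebra.smul_def, map_ofNat, mul_assoc]
    have e2 : ((2 : ℂ)) • ((1 : A) - v) = c + 1 := by
      rw [smul_sub, hv, smul_smul]
      have h21 : ((2 : ℂ)) * (-(2⁻¹)) = -1 := by norm_num
      rw [h21, neg_one_smul]
      have h22 : ((2 : ℂ)) • (1 : A) = 1 + 1 := by
        rw [Algebra.smul_def, map_ofNat, mul_one, one_add_one_eq_two]
      rw [h22]
      abel
    have h3 : ((2 : ℂ)) • (a * a) = ((2 : ℂ)) • ((1 : A) - v) := by rw [e1, e2, heq]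
    have h4 := congrArg (fun z : A => ((2⁻¹ : ℂ)) • z) h3
    simpa only [smul_smul, (by norm_num : ((2⁻¹ : ℂ)) * 2 = 1), one_smul] using h4
  -- the series
  set f : ℕ → A := fun k => ((sqCoef k : ℝ) : ℂ) • v ^ k with hf
  have hf_norm : ∀ k, ‖f k‖ ≤ sqCoef k * r ^ k := by
    intro k
    match k with
    | 0 => simp [hf, sqCoef_zero]
    | (k + 1) =>
      rw [hf]
      simp only []
      rw [norm_smul]
      have hn : ‖((sqCoef (k + 1) : ℝ) : ℂ)‖ = sqCoef (k + 1) := by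
        rw [Complex.norm_real, Real.norm_of_nonneg (sqCoef_nonneg _)]
      rw [hn]
      calc sqCoef (k + 1) * ‖v ^ (k + 1)‖ ≤ sqCoef (k + 1) * ‖v‖ ^ (k + 1) :=
            mul_le_mul_of_nonneg_left (norm_pow_le' v (Nat.succ_pos k)) (sqCoef_nonneg _)
        _ ≤ sqCoef (k + 1) * r ^ (k + 1) := mul_le_mul_of_nonneg_left (hvr _) (sqCoef_nonneg _)
  have hmaj : Summable (fun k => sqCoef k * r ^ k) := by
    apply summable_of_sum_range_le (c := 1 - Real.sqrt (1 - r))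
    · intro k; exact mul_nonneg (sqCoef_nonneg k) (pow_nonneg hr0 k)
    · intro n; exact sqCoef_partial_sum hr0 hr1 n
  have hsum_norm : Summable (fun k => ‖f k‖) :=
    Summable.of_nonneg_of_le (fun k => norm_nonneg _) hf_norm hmaj
  have hsum : Summable f := hsum_norm.of_norm
  set g : A := ∑' k, f k with hg
  have hg_norm : ‖g‖ ≤ 1 - Real.sqrt (1 - r) := by
    calc ‖g‖ ≤ ∑' k, ‖f k‖ := norm_tsum_le_tsum_norm hsum_norm
      _ ≤ ∑' k, sqCoef k * r ^ k := Summable.tsum_le_tsum hf_norm hsum_norm hmaj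
      _ ≤ 1 - Real.sqrt (1 - r) :=
          Summable.tsum_le_of_sum_range_le hmaj (fun n => sqCoef_partial_sum hr0 hr1 n)
  have hg1 : ‖g‖ ≤ 1 := hg_norm.trans (by linarith)
  -- commutation
  have hac : Commute a c := by
    have hc' : c = 2 * a * a - 1 := eq_sub_of_add_eq heq
    rw [hc']
    exact (((Commute.ofNat_right a 2).mul_right (Commute.refl a)).mul_right
      (Commute.refl a)).sub_right (Commute.one_right a)
  have hav : Commute a v := (hac.sub_right (Commute.one_right a)).smul_right _
  have hag : Commute a g := by
    show a * g = g * a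
    calc a * g = ∑' k, a * f k := (hsum.tsum_mul_left a).symm
      _ = ∑' k, f k * a := by
          apply tsum_congr
          intro k
          rw [hf]
          simp only []
          rw [mul_smul_comm, smul_mul_assoc, (hav.pow_right k).eq]
      _ = g * a := hsum.tsum_mul_right a
  -- Cauchy product
  set F : ℕ → A := fun k => ∑ p ∈ Finset.HasAntidiagonal.antidiagonal k, f p.1 * f p.2 with hFdef
  have hgg : g * g = ∑' k, F k :=
    tsum_mul_tsum_eq_tsum_sum_antidiagonal_of_summable_norm hsum_norm hsum_norm
  have hFsum : Summable F :=
    (summable_norm_sum_mul_antidiagonal_of_summable_norm hsum_norm hsum_norm).of_norm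
  have hFk : ∀ k, k ≠ 1 → F k = ((2 * sqCoef k : ℝ) : ℂ) • v ^ k := by
    intro k hk
    rw [hFdef]
    simp only []
    have hterm : ∀ p ∈ Finset.HasAntidiagonal.antidiagonal k,
        f p.1 * f p.2 = ((sqCoef p.1 * sqCoef p.2 : ℝ) : ℂ) • v ^ k := by
      intro p hp
      rw [Finset.HasAntidiagonal.mem_antidiagonal] at hp
      rw [hf]
      simp only []
      rw [smul_mul_smul_comm, ← pow_add, hp]
      norm_cast
    rw [Finset.sum_congr rfl hterm, ← Finset.sum_smul]
    congr 1
    rw [← Complex.ofReal_sum, sqCoef_antidiagonal k hk]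
  have hF1 : F 1 = 0 := by
    rw [hFdef]
    simp only []
    rw [Finset.Nat.sum_antidiagonal_eq_sum_range_succ_mk]
    simp [Finset.sum_range_succ, hf, sqCoef_zero]
  -- main identity : g + g - g * g = v
  have hkey : g + g - g * g = v := by
    have hsum2 : Summable (fun k => f k + f k) := hsum.add hsum
    have e1 : g + g = ∑' k, (f k + f k) := (Summable.tsum_add hsum hsum).symm
    rw [e1, hgg, ← Summable.tsum_sub hsum2 hFsum]
    rw [tsum_eq_single 1 ?_]
    · rw [hF1, sub_zero, hf]
      simp only []
      have hhalf : ((sqCoef 1 : ℝ) : ℂ) + ((sqCoef 1 : ℝ) : ℂ) = 1 := by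
        rw [sqCoef_one]; norm_num
      rw [← add_smul, hhalf, one_smul, pow_one]
    · intro k hk
      rw [hFk k hk, hf]
      simp only []
      rw [← add_smul]
      have h2d : ((sqCoef k : ℝ) : ℂ) + ((sqCoef k : ℝ) : ℂ) = ((2 * sqCoef k : ℝ) : ℂ) := by
        push_cast; ring
      rw [h2d, sub_self]
  -- invertibility of a + (1 - g)
  have h1g : Commute (1 - a) g := (Commute.one_left g).sub_left hag
  have hρ2 : spectralRadius ℂ ((1 - a) + g) < 2 := by
    have h1 : spectralRadius ℂ (1 - a) < 1 := by
      rw [← neg_sub a 1, spectralRadius_neg_eq']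
      exact hrad
    have h2 : spectralRadius ℂ g ≤ 1 := spectralRadius_le_one' hg1
    calc spectralRadius ℂ ((1 - a) + g)
        ≤ spectralRadius ℂ (1 - a) + spectralRadius ℂ g :=
          spectralRadius_add_le_of_commute' h1g
      _ ≤ spectralRadius ℂ (1 - a) + 1 := add_le_add_right h2 _
      _ < 1 + 1 := ENNReal.add_lt_add_right ENNReal.one_ne_top h1
      _ = 2 := one_add_one_eq_two
  have hunit : IsUnit ((algebraMap ℂ A) 2 - ((1 - a) + g)) := by
    have hm : (2 : ℂ) ∈ resolventSet ℂ ((1 - a) + g) := by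
      apply spectrum.mem_resolventSet_of_spectralRadius_lt
      have hnn : (‖(2 : ℂ)‖₊ : ℝ≥0∞) = 2 := by
        rw [Complex.nnnorm_ofNat]
        exact_mod_cast rfl
      rw [hnn]
      exact hρ2
    rwa [spectrum.mem_resolventSet_iff] at hm
  have hrw : (algebraMap ℂ A) 2 - ((1 - a) + g) = a + (1 - g) := by
    rw [map_ofNat, ← one_add_one_eq_two]
    abel
  rw [hrw] at hunit
  -- factorization
  have hcomm : Commute a (1 - g) := (Commute.one_right a).sub_right hag
  have hfac : ((a - 1) + g) * (a + (1 - g)) = 0 := by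
    have hsplit : (a - 1) + g = a - (1 - g) := by abel
    rw [hsplit]
    have e : (a - (1 - g)) * (a + (1 - g)) = a * a - (1 - g) * (1 - g) :=
      hcomm.mul_self_sub_mul_self_eq'.symm
    rw [e]
    have e2 : (1 - g) * (1 - g) = 1 - (g + g - g * g) := by noncomm_ring
    rw [e2, hkey, hsq, sub_self]
  have hzero : (a - 1) + g = 0 := by
    obtain ⟨U, hU⟩ := hunit
    calc (a - 1) + g = ((a - 1) + g) * (↑U * ↑U⁻¹) := by rw [Units.mul_inv, mul_one]
      _ = (((a - 1) + g) * ↑U) * ↑U⁻¹ := by rw [mul_assoc]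
      _ = 0 := by rw [hU, hfac, zero_mul]
  have hfin : a - 1 = -g := eq_neg_of_add_eq_zero_left hzero
  rw [hfin, norm_neg]
  exact hg_norm

theorem explicit_convergence_control {A : Type*} [NormedRing A]
    [NormedAlgebra ℂ A] [CompleteSpace A] (C : ℝ → A)
    (hC : IsCosineFunction C) (η : ℝ) (hη : 0 < η)
    (h : ∀ t : ℝ, |t| ≤ η →
      ‖C t - 1‖ ≤ 2 ∧ spectralRadius ℂ (C (t / 2) - 1) < 1)
    (u : ℕ → ℝ) (hu0 : u 0 = 2)
    (hurec : ∀ n : ℕ, u (n + 1) = 1 - Real.sqrt (1 - u n / 2)) :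
    ∀ n : ℕ, 1 ≤ n → ∀ t : ℝ, |t| ≤ η / 2 ^ n → ‖C t - 1‖ ≤ u n := by
  have hub : ∀ n, 0 ≤ u n ∧ u n ≤ 2 := by
    intro n
    induction n with
    | zero => rw [hu0]; norm_num
    | succ n ih =>
      rw [hurec n]
      have h1 : 0 ≤ 1 - u n / 2 := by linarith [ih.2]
      have h2 : Real.sqrt (1 - u n / 2) ≤ 1 := by
        calc Real.sqrt (1 - u n / 2) ≤ Real.sqrt 1 := Real.sqrt_le_sqrt (by linarith [ih.1])
          _ = 1 := Real.sqrt_one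
      exact ⟨by linarith, by linarith [Real.sqrt_nonneg (1 - u n / 2)]⟩
  have main : ∀ n : ℕ, ∀ t : ℝ, |t| ≤ η / 2 ^ n → ‖C t - 1‖ ≤ u n := by
    intro n
    induction n with
    | zero =>
      intro t ht
      simp only [pow_zero, div_one] at ht
      rw [hu0]
      exact (h t ht).1
    | succ n ih =>
      intro t ht
      have h2t : |2 * t| ≤ η / 2 ^ n := by
        rw [abs_mul, abs_two]
        rw [pow_succ] at ht
        have e : η / (2 ^ n * 2) = η / 2 ^ n / 2 := by rw [div_div]
        rw [e] at ht
        linarith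
      have h2tη : |2 * t| ≤ η := by
        refine h2t.trans (div_le_self hη.le ?_)
        exact one_le_pow₀ one_le_two
      have hy := ih (2 * t) h2t
      have hρ := (h (2 * t) h2tη).2
      rw [show (2 * t) / 2 = t by ring] at hρ
      have heq : C (2 * t) + 1 = 2 * C t * C t := by
        have h0 := hC.2 t t
        rw [sub_self, hC.1, show t + t = 2 * t by ring] at h0
        exact h0
      have hk := key_step (C t) (C (2 * t)) heq (r := u n / 2)
        (by linarith [(hub n).1]) (by linarith [(hub n).2]) (by linarith) hρ
      rw [hurec n]
      exact hk
  intro n _ t ht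
  exact main n t ht
end
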